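/- arXiv:2309.08834 — 3 statements merged into one kernel-verified Lean document; each statement's English description precedes it below -/
import Mathlib

section
/- Let M ≥ 1 and 1 ≤ k ≤ M. The number of ranking-compatible functions f : {1,…,M} → {1,…,M} such that exactly k elements x satisfy f(x) = M equals the number of permutations of {1,…,M} having exactly k cycles, i.e., the unsigned Stirling number of the first kind [M k]. Hence the degree distribution of the founder (the highest-rank individual M) in a uniformly random ranking-compatible map is Φ(k,M) = [M k]/M!. -/
open Equiv Equiv.Perm Finset

namespace Stmt16Aux

variable {α : Type*} [Fintype α] [DecidableEq α]

/-- Total number of orbits of a permutation: number of nontrivial cycles plus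
number of fixed points. -/
def statP (σ : Perm α) : ℕ :=
  Multiset.card σ.cycleType + (univ.filter (fun x => σ x = x)).card

lemma fix_card (σ : Perm α) :
    (univ.filter (fun x => σ x = x)).card = Fintype.card α - σ.support.card := by
  have h : (univ.filter (fun x => σ x = x)) = σ.supportᶜ := by
    ext x; simp [Equiv.Perm.mem_support, not_not]
  rw [h, Finset.card_compl]

/-- Multiplying by a transposition that joins a fixed point to another point
decreases the total number of orbits by one. -/
lemma statP_swap_mul (τ : Perm α) (a b : α) (ha : τ a = a) (hab : b ≠ a) :
    statP (swap a b * τ) + 1 = statP τ := by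
  have haS : a ∉ τ.support := by simp [Equiv.Perm.mem_support, ha]
  by_cases hb : τ b = b
  · have hbS : b ∉ τ.support := by simp [Equiv.Perm.mem_support, hb]
    have hd : Equiv.Perm.Disjoint (swap a b) τ := by
      intro x
      rcases eq_or_ne x a with rfl | hxa
      · right; exact ha
      rcases eq_or_ne x b with rfl | hxb
      · right; exact hb
      · left; exact swap_apply_of_ne_of_ne hxa hxb
    have h1 : Multiset.card ((swap a b * τ).cycleType) = 1 + Multiset.card τ.cycleType := by
      rw [hd.cycleType_mul, Multiset.card_add, (isCycle_swap (Ne.symm hab)).cycleType]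
      simp
    have h2 : ((swap a b) * τ).support.card = τ.support.card + 2 := by
      rw [hd.support_mul, support_swap (Ne.symm hab)]
      rw [Finset.card_union_of_disjoint, Finset.card_pair (Ne.symm hab)]
      · omega
      · refine Finset.disjoint_left.mpr ?_
        intro x hx
        rcases Finset.mem_insert.mp hx with rfl | hx
        · exact haS
        · rw [Finset.mem_singleton] at hx; subst hx; exact hbS
    have h3 : ((swap a b) * τ).support.card ≤ Fintype.card α := Finset.card_le_univ _
    simp only [statP, fix_card]
    omega
  · have hbsupp : b ∈ τ.support := mem_support.mpr hb
    have hc : (τ.cycleOf b).IsCycle := isCycle_cycleOf τ hb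
    have hmem : τ.cycleOf b ∈ τ.cycleFactorsFinset :=
      cycleOf_mem_cycleFactorsFinset_iff.mpr hbsupp
    have hd : Equiv.Perm.Disjoint (τ * (τ.cycleOf b)⁻¹) (τ.cycleOf b) :=
      disjoint_mul_inv_of_mem_cycleFactorsFinset hmem
    set c := τ.cycleOf b with hc_def
    set τ' := τ * c⁻¹ with hτ'def
    have hττ : τ = τ' * c := by rw [hτ'def]; group
    have hsubc : c.support ⊆ τ.support := support_cycleOf_le τ b
    have hac : a ∉ c.support := fun h => haS (hsubc h)
    have hbc : b ∈ c.support := by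
      rw [hc_def, mem_support_cycleOf_iff]; exact ⟨Equiv.Perm.SameCycle.refl _ _, hbsupp⟩
    have hlen : 2 ≤ (τ.toList b).length := by
      rw [Equiv.Perm.length_toList]; exact hc.two_le_card_support
    obtain ⟨t, ht⟩ : ∃ t, τ.toList b = b :: t := by
      have hne : τ.toList b ≠ [] := by
        intro h; rw [Equiv.Perm.toList_eq_nil_iff] at h; exact h hbsupp
      obtain ⟨hd, t, ht⟩ := List.exists_cons_of_ne_nil hne
      refine ⟨t, ?_⟩
      have h0 := Equiv.Perm.toList_getElem_zero (p := τ) (x := b) hbsupp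
      simp only [ht, List.getElem_cons_zero] at h0
      rw [ht, h0]
    have hform : (b :: t).formPerm = c := by rw [← ht]; exact formPerm_toList τ b
    have hnod2 : (b :: t).Nodup := ht ▸ nodup_toList τ b
    have hlen2 : 2 ≤ (b :: t).length := ht ▸ hlen
    have hne2 : ∀ x : α, (b :: t) ≠ [x] := by
      intro x hx; rw [hx] at hlen2; simp at hlen2
    have hsuppc : c.support = (b :: t).toFinset := by
      rw [← hform, List.support_formPerm_of_nodup _ hnod2 hne2]
    have hal : a ∉ (b :: t) := by
      intro hmem'
      exact hac (hsuppc ▸ List.mem_toFinset.mpr hmem')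
    have hnod3 : (a :: b :: t).Nodup := List.nodup_cons.mpr ⟨hal, hnod2⟩
    have hne3 : ∀ x : α, (a :: b :: t) ≠ [x] := by intro x hx; simp at hx
    have hc2 : (a :: b :: t).formPerm.IsCycle := List.isCycle_formPerm hnod3 (by simp)
    set c₂ := (a :: b :: t).formPerm with hc₂def
    have hsupp2 : c₂.support = insert a c.support := by
      rw [hc₂def, List.support_formPerm_of_nodup _ hnod3 hne3, hsuppc]
      simp
    have hc₂eq : c₂ = swap a b * c := by
      rw [hc₂def, List.formPerm_cons_cons, hform]
    have hsubτ' : τ'.support ⊆ τ.support := by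
      intro x hx
      rcases Finset.mem_union.mp (support_mul_le τ c⁻¹ hx) with h | h
      · exact h
      · exact hsubc (by rwa [support_inv] at h)
    have hdis_supp : _root_.Disjoint τ'.support c.support := hd.disjoint_support
    have hbτ' : b ∉ τ'.support := fun h => (Finset.disjoint_left.mp hdis_supp h) hbc
    have haτ' : a ∉ τ'.support := fun h => haS (hsubτ' h)
    have hd2 : Equiv.Perm.Disjoint (swap a b) τ' := by
      rw [disjoint_iff_disjoint_support, support_swap (Ne.symm hab)]
      refine Finset.disjoint_left.mpr ?_
      intro x hx
      rcases Finset.mem_insert.mp hx with rfl | hx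
      · exact haτ'
      · rw [Finset.mem_singleton] at hx; subst hx; exact hbτ'
    have hd3 : Equiv.Perm.Disjoint τ' c₂ := by
      rw [disjoint_iff_disjoint_support, hsupp2]
      exact Finset.disjoint_insert_right.mpr ⟨haτ', hdis_supp⟩
    have hg : swap a b * τ = τ' * c₂ := by
      rw [hττ, ← mul_assoc, (hd2.commute).eq, mul_assoc, ← hc₂eq]
    have hct1 : Multiset.card ((swap a b * τ).cycleType)
        = Multiset.card τ'.cycleType + 1 := by
      rw [hg, hd3.cycleType_mul, Multiset.card_add, hc2.cycleType]; simp
    have hct2 : Multiset.card τ.cycleType = Multiset.card τ'.cycleType + 1 := by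
      conv_lhs => rw [hττ]
      rw [hd.cycleType_mul, Multiset.card_add, hc.cycleType]; simp
    have hsg : (swap a b * τ).support = insert a τ.support := by
      rw [hg, hd3.support_mul, hsupp2]
      conv_rhs => rw [hττ, hd.support_mul]
      exact Finset.union_insert _ _ _
    have hcard1 : (swap a b * τ).support.card = τ.support.card + 1 := by
      rw [hsg, Finset.card_insert_of_notMem haS]
    have hcard2 : (swap a b * τ).support.card ≤ Fintype.card α := Finset.card_le_univ _
    simp only [statP, fix_card]
    omega

def eqvSucc (n : ℕ) : Fin n ≃ {x : Fin (n + 1) // x ≠ 0} where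
  toFun x := ⟨x.succ, Fin.succ_ne_zero x⟩
  invFun y := y.1.pred y.2
  left_inv x := by simp
  right_inv y := by simp

lemma decompE_eq (n : ℕ) (e : Perm (Fin n)) :
    Equiv.Perm.decomposeFin.symm (0, e) = e.extendDomain (eqvSucc n) := by
  apply Equiv.ext; intro x
  refine Fin.cases ?_ ?_ x
  · rw [Equiv.Perm.decomposeFin_symm_apply_zero,
      Equiv.Perm.extendDomain_apply_not_subtype _ _ (by simp)]
  · intro j
    have h1 := Equiv.Perm.extendDomain_apply_image (e := e) (f := eqvSucc n) j
    rw [Equiv.Perm.decomposeFin_symm_apply_succ]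
    have h2 : ((eqvSucc n) j : Fin (n + 1)) = j.succ := rfl
    have h3 : ((eqvSucc n) (e j) : Fin (n + 1)) = (e j).succ := rfl
    rw [h2, h3] at h1
    rw [h1]
    simp [Equiv.swap_self]

lemma statP_decompE (n : ℕ) (e : Perm (Fin n)) :
    statP (Equiv.Perm.decomposeFin.symm (0, e)) = statP e + 1 := by
  have hct : Multiset.card (Equiv.Perm.decomposeFin.symm (0, e)).cycleType
      = Multiset.card e.cycleType := by
    rw [decompE_eq, Equiv.Perm.cycleType_extendDomain]
  have hfix : (univ.filter (fun x => Equiv.Perm.decomposeFin.symm (0, e) x = x)).card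
      = (univ.filter (fun x => e x = x)).card + 1 := by
    rw [Finset.card_filter, Finset.card_filter, Fin.sum_univ_succ]
    have h0 : Equiv.Perm.decomposeFin.symm (0, e) 0 = 0 :=
      Equiv.Perm.decomposeFin_symm_apply_zero 0 e
    rw [if_pos h0]
    have hs : ∀ j : Fin n,
        (if Equiv.Perm.decomposeFin.symm (0, e) j.succ = j.succ then 1 else 0)
          = (if e j = j then (1:ℕ) else 0) := by
      intro j
      rw [Equiv.Perm.decomposeFin_symm_apply_succ]
      simp [Equiv.swap_self, Fin.succ_inj]
    rw [Finset.sum_congr rfl (fun j _ => hs j)]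
    omega
  simp only [statP, hct, hfix]
  omega

lemma statP_decomp (n : ℕ) (p : Fin (n + 1)) (e : Perm (Fin n)) :
    statP (Equiv.Perm.decomposeFin.symm (p, e))
      = (if p = 0 then 1 else 0) + statP e := by
  rcases eq_or_ne p 0 with rfl | hp
  · rw [statP_decompE]; simp [Nat.add_comm]
  · rw [if_neg hp]
    have hsplit : Equiv.Perm.decomposeFin.symm (p, e)
        = swap 0 p * Equiv.Perm.decomposeFin.symm (0, e) := by
      apply Equiv.ext; intro x
      refine Fin.cases ?_ ?_ x
      · simp
      · intro j
        simp [Equiv.Perm.decomposeFin_symm_apply_succ, Equiv.swap_self]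
    have h0 : Equiv.Perm.decomposeFin.symm (0, e) 0 = 0 :=
      Equiv.Perm.decomposeFin_symm_apply_zero 0 e
    have hkey := statP_swap_mul (Equiv.Perm.decomposeFin.symm (0, e)) 0 p h0 hp
    rw [← hsplit, statP_decompE] at hkey
    omega

/-! ### The two counting functions -/

def A (m k : ℕ) : ℕ :=
  ((univ : Finset (Fin (m + 1) → Fin (m + 1))).filter (fun f =>
    (∀ i, i ≤ f i) ∧ (univ.filter (fun x => f x = Fin.last m)).card = k)).card

def B (m k : ℕ) : ℕ :=
  ((univ : Finset (Perm (Fin (m + 1)))).filter (fun σ => statP σ = k)).card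

lemma Brec (m k : ℕ) : B (m + 1) (k + 1) = B m k + (m + 1) * B m (k + 1) := by
  rw [B, Finset.univ_perm_fin_succ, Finset.filter_map, Finset.card_map,
    Finset.card_filter, Fintype.sum_prod_type]
  calc (∑ p : Fin (m + 2), ∑ e : Perm (Fin (m + 1)),
        if (fun σ => statP σ = k + 1) (Equiv.Perm.decomposeFin.symm.toEmbedding (p, e))
          then (1:ℕ) else 0)
      = ∑ p : Fin (m + 2), ∑ e : Perm (Fin (m + 1)),
          if (if p = 0 then 1 else 0) + statP e = k + 1 then 1 else 0 := by
        refine Finset.sum_congr rfl fun p _ => Finset.sum_congr rfl fun e _ => ?_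
        simp only [Equiv.coe_toEmbedding, statP_decomp]
    _ = B m k + (m + 1) * B m (k + 1) := by
        rw [Fin.sum_univ_succ]
        have h0 : (∑ e : Perm (Fin (m + 1)),
            if (if (0 : Fin (m+2)) = 0 then 1 else 0) + statP e = k + 1 then (1:ℕ) else 0)
            = B m k := by
          rw [B, Finset.card_filter]
          refine Finset.sum_congr rfl fun e _ => ?_
          refine if_congr ?_ rfl rfl
          simp only [if_pos rfl, if_true]
          omega
        have hs : ∀ j : Fin (m + 1), (∑ e : Perm (Fin (m + 1)),
            if (if (j.succ : Fin (m+2)) = 0 then 1 else 0) + statP e = k + 1 then (1:ℕ) else 0)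
            = B m (k + 1) := by
          intro j
          rw [B, Finset.card_filter]
          refine Finset.sum_congr rfl fun e _ => ?_
          refine if_congr ?_ rfl rfl
          rw [if_neg (Fin.succ_ne_zero j)]
          omega
        rw [h0, Finset.sum_congr rfl (fun j _ => hs j), Finset.sum_const]
        simp [Finset.card_univ, mul_comm]

def tail' (m : ℕ) (f : Fin (m + 2) → Fin (m + 2)) : Fin (m + 1) → Fin (m + 1) :=
  fun x => ⟨(f x.succ).1 - 1, by have := (f x.succ).isLt; omega⟩

def cons' (m : ℕ) (p : Fin (m + 2)) (g : Fin (m + 1) → Fin (m + 1)) :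
    Fin (m + 2) → Fin (m + 2) :=
  Fin.cases p (fun x => (g x).succ)

lemma stat_split (m : ℕ) (f : Fin (m + 2) → Fin (m + 2)) (hrc : ∀ i, i ≤ f i) :
    (univ.filter (fun x : Fin (m + 2) => f x = Fin.last (m + 1))).card
      = (if f 0 = Fin.last (m + 1) then 1 else 0)
        + (univ.filter (fun x : Fin (m + 1) => tail' m f x = Fin.last m)).card := by
  rw [Finset.card_filter, Finset.card_filter, Fin.sum_univ_succ]
  congr 1
  refine Finset.sum_congr rfl fun x _ => ?_
  refine if_congr ?_ rfl rfl
  have h1 := hrc x.succ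
  rw [Fin.le_def] at h1
  have h2 := (f x.succ).isLt
  rw [Fin.ext_iff, Fin.ext_iff]
  simp only [tail', Fin.val_last, Fin.val_succ] at *
  omega

lemma Arec (m k : ℕ) : A (m + 1) (k + 1) = A m k + (m + 1) * A m (k + 1) := by
  have hcard : A (m + 1) (k + 1) =
      ((univ : Finset (Fin (m + 2) × (Fin (m + 1) → Fin (m + 1)))).filter
        (fun pg => (∀ j, j ≤ pg.2 j) ∧
          (if pg.1 = Fin.last (m + 1) then 1 else 0)
            + (univ.filter (fun x => pg.2 x = Fin.last m)).card = k + 1)).card := by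
    rw [A]
    refine Finset.card_nbij' (fun f => (f 0, tail' m f))
      (fun pg => cons' m pg.1 pg.2) ?_ ?_ ?_ ?_
    · intro f hf
      simp only [Finset.mem_coe, Finset.mem_filter, Finset.mem_univ, true_and] at hf ⊢
      obtain ⟨hrc, hstat⟩ := hf
      refine ⟨?_, ?_⟩
      · intro j
        have h1 := hrc j.succ
        rw [Fin.le_def] at h1 ⊢
        simp only [tail', Fin.val_succ] at *
        omega
      · rw [← hstat, stat_split m f hrc]
    · intro pg hpg
      obtain ⟨p, g⟩ := pg
      simp only [Finset.mem_coe, Finset.mem_filter, Finset.mem_univ, true_and] at hpg ⊢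
      obtain ⟨hrc, hstat⟩ := hpg
      have hrc' : ∀ i, i ≤ cons' m p g i := by
        intro i
        refine Fin.cases ?_ ?_ i
        · exact Fin.zero_le _
        · intro j
          have := hrc j
          rw [Fin.le_def] at this ⊢
          simp [cons', Fin.val_succ]
          omega
      refine ⟨hrc', ?_⟩
      rw [stat_split m _ hrc']
      have h0 : cons' m p g 0 = p := rfl
      have htail : tail' m (cons' m p g) = g := by
        funext x
        refine Fin.ext ?_
        simp [tail', cons', Fin.val_succ]
      rw [h0, htail]
      exact hstat
    · intro f hf
      simp only [Finset.mem_coe, Finset.mem_filter, Finset.mem_univ, true_and] at hf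
      obtain ⟨hrc, -⟩ := hf
      funext x
      refine Fin.cases rfl ?_ x
      intro j
      have h1 := hrc j.succ
      rw [Fin.le_def] at h1
      refine Fin.ext ?_
      simp only [cons', Fin.cases_succ, tail', Fin.val_succ] at *
      omega
    · intro pg hpg
      obtain ⟨p, g⟩ := pg
      refine Prod.ext rfl ?_
      funext x
      refine Fin.ext ?_
      simp [tail', cons', Fin.val_succ]
  rw [hcard, Finset.card_filter, Fintype.sum_prod_type, Fin.sum_univ_castSucc]
  have hlast : (∑ g : Fin (m + 1) → Fin (m + 1),
      if (∀ j, j ≤ g j) ∧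
        (if (Fin.last (m + 1) : Fin (m + 2)) = Fin.last (m + 1) then 1 else 0)
          + (univ.filter (fun x => g x = Fin.last m)).card = k + 1 then (1:ℕ) else 0)
      = A m k := by
    rw [A, Finset.card_filter]
    refine Finset.sum_congr rfl fun g _ => ?_
    refine if_congr (and_congr_right fun _ => ?_) rfl rfl
    simp only [if_pos rfl, if_true]
    omega
  have hcast : ∀ j : Fin (m + 1), (∑ g : Fin (m + 1) → Fin (m + 1),
      if (∀ i, i ≤ g i) ∧
        (if (Fin.castSucc j : Fin (m + 2)) = Fin.last (m + 1) then 1 else 0)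
          + (univ.filter (fun x => g x = Fin.last m)).card = k + 1 then (1:ℕ) else 0)
      = A m (k + 1) := by
    intro j
    rw [A, Finset.card_filter]
    refine Finset.sum_congr rfl fun g _ => ?_
    refine if_congr (and_congr_right fun _ => ?_) rfl rfl
    rw [if_neg (Fin.castSucc_lt_last j).ne, Nat.zero_add]
  rw [hlast, Finset.sum_congr rfl (fun j _ => hcast j), Finset.sum_const]
  simp [Finset.card_univ, mul_comm, Nat.add_comm]

lemma A0 (m : ℕ) : A m 0 = 0 := by
  rw [A, Finset.card_eq_zero, Finset.filter_eq_empty_iff]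
  rintro f - ⟨hrc, hstat⟩
  have hlast : f (Fin.last m) = Fin.last m := le_antisymm (Fin.le_last _) (hrc _)
  have hmem : Fin.last m ∈ univ.filter (fun x => f x = Fin.last m) :=
    Finset.mem_filter.mpr ⟨Finset.mem_univ _, hlast⟩
  rw [Finset.card_eq_zero] at hstat
  rw [hstat] at hmem
  exact absurd hmem (Finset.notMem_empty _)

lemma B0 (m : ℕ) : B m 0 = 0 := by
  rw [B, Finset.card_eq_zero, Finset.filter_eq_empty_iff]
  intro σ _ hstat
  rw [statP] at hstat
  have h1 : Multiset.card σ.cycleType = 0 := by omega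
  have h2 : (univ.filter (fun x => σ x = x)).card = 0 := by omega
  have hσ : σ = 1 := card_cycleType_eq_zero.mp h1
  subst hσ
  have hmem : (0 : Fin (m + 1)) ∈ univ.filter (fun x => (1 : Perm (Fin (m+1))) x = x) :=
    Finset.mem_filter.mpr ⟨Finset.mem_univ _, rfl⟩
  rw [Finset.card_eq_zero] at h2
  rw [h2] at hmem
  exact absurd hmem (Finset.notMem_empty _)

lemma base (k : ℕ) : A 0 k = B 0 k := by
  have hA : ∀ f : Fin (0 + 1) → Fin (0 + 1),
      ((∀ i, i ≤ f i) ∧ (univ.filter (fun x => f x = Fin.last 0)).card = k) ↔ k = 1 := by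
    intro f
    have hf : ∀ x : Fin (0 + 1), f x = Fin.last 0 := by
      intro x
      have h := (f x).isLt
      exact Fin.ext (by simp only [Fin.val_last]; omega)
    have h2 : (univ.filter (fun x : Fin (0 + 1) => f x = Fin.last 0)).card = 1 := by
      rw [Finset.filter_true_of_mem (fun x _ => hf x), Finset.card_univ]
      simp
    constructor
    · rintro ⟨-, h⟩; omega
    · intro hk
      refine ⟨fun i => Fin.le_def.mpr ?_, by omega⟩
      have := i.isLt
      omega
  have hB : ∀ σ : Perm (Fin (0 + 1)), (statP σ = k) ↔ k = 1 := by
    intro σ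
    have hσ : σ = 1 := by
      apply Equiv.ext
      intro x
      have h1 := (σ x).isLt
      have h2 := x.isLt
      exact Fin.ext (by simp only [Perm.one_apply]; omega)
    subst hσ
    have h1 : statP (1 : Perm (Fin (0 + 1))) = 1 := by
      rw [statP, cycleType_one]
      simp
    omega
  rcases eq_or_ne k 1 with rfl | hk
  · rw [A, B, Finset.filter_true_of_mem (fun f _ => (hA f).mpr rfl),
      Finset.filter_true_of_mem (fun σ _ => (hB σ).mpr rfl),
      Finset.card_univ, Finset.card_univ]
    simp [Fintype.card_perm]
  · rw [A, B, Finset.filter_false_of_mem (fun f _ h => hk ((hA f).mp h)),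
      Finset.filter_false_of_mem (fun σ _ h => hk ((hB σ).mp h))]
    rfl

lemma main (m k : ℕ) : A m k = B m k := by
  induction m generalizing k with
  | zero => exact base k
  | succ n ih =>
    cases k with
    | zero => rw [A0, B0]
    | succ k => rw [Arec, Brec, ih k, ih (k + 1)]

end Stmt16Aux

/-- The number of ranking-compatible maps `f : Fin M → Fin M` such that exactly
`k` elements map to the top element (the founder) equals the number of
permutations of `Fin M` with exactly `k` cycles (fixed points counted as
cycles), i.e. the unsigned Stirling number of the first kind. -/
theorem stmt16 (M k : ℕ) (hM : 1 ≤ M) (hk : 1 ≤ k) (hkM : k ≤ M) :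
    (Finset.univ.filter (fun f : Fin M → Fin M =>
        (∀ i : Fin M, i ≤ f i) ∧
        (Finset.univ.filter (fun x : Fin M =>
          f x = ⟨M - 1, Nat.sub_one_lt_of_le hM le_rfl⟩)).card = k)).card
      = (Finset.univ.filter (fun σ : Equiv.Perm (Fin M) =>
          σ.cycleType.card +
            (Finset.univ.filter (fun x : Fin M => σ x = x)).card = k)).card := by
  obtain ⟨m, rfl⟩ : ∃ m, M = m + 1 := ⟨M - 1, by omega⟩
  exact Stmt16Aux.main m k
end

section
/- For every integer k ≥ 1, lim_{M→∞} (1/(M·M!)) Σ_f |{i : |f^{−1}({i})| = k−1}| = 2^{−k}, where the sum runs over all M! ranking-compatible functions f : {1,…,M} → {1,…,M}. That is, the asymptotic fraction of vertices of degree k in a uniformly random ranking-compatible map is n_k = 2^{−k}; in particular the asymptotic fraction of followers is 1/2. -/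
open Finset

noncomputable def Esym (k a b : ℕ) : ℝ :=
  ∑ S ∈ (Finset.Ico a b).powersetCard k, ∏ m ∈ S, (1 / (m : ℝ))

lemma Esym_zero (a b : ℕ) : Esym 0 a b = 1 := by
  simp [Esym]

lemma Esym_of_ge {a b : ℕ} (h : b ≤ a) {k : ℕ} (hk : k ≠ 0) : Esym k a b = 0 := by
  rw [Esym, Finset.powersetCard_eq_empty.2, Finset.sum_empty]
  rw [Nat.card_Ico]; omega

lemma Esym_succ_left {a b : ℕ} (h : a < b) (k : ℕ) :
    Esym (k+1) a b = (1 / (a:ℝ)) * Esym k (a+1) b + Esym (k+1) (a+1) b := by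
  classical
  have ha : a ∉ Finset.Ico (a+1) b := by simp
  have hdisj : Disjoint ((Finset.Ico (a+1) b).powersetCard (k+1))
      (((Finset.Ico (a+1) b).powersetCard k).image (insert a)) := by
    rw [Finset.disjoint_left]
    intro S hS hS'
    rcases Finset.mem_image.1 hS' with ⟨T, hT, rfl⟩
    have : a ∈ insert a T := Finset.mem_insert_self a T
    exact ha ((Finset.mem_powersetCard.1 hS).1 this)
  rw [Esym, ← Finset.insert_Ico_add_one_left_eq_Ico h, Finset.powersetCard_succ_insert ha,
    Finset.sum_union hdisj, add_comm]
  congr 1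
  · rw [Finset.sum_image]
    · rw [Esym, Finset.mul_sum]
      refine Finset.sum_congr rfl fun S hS => ?_
      rw [Finset.prod_insert]
      intro haS
      exact ha ((Finset.mem_powersetCard.1 hS).1 haS)
    · intro S hS T hT hST
      have hSa : a ∉ S := fun hc => ha ((Finset.mem_powersetCard.1 hS).1 hc)
      have hTa : a ∉ T := fun hc => ha ((Finset.mem_powersetCard.1 hT).1 hc)
      ext x
      constructor <;> intro hx
      · have : x ∈ insert a T := hST ▸ (Finset.mem_insert_of_mem hx)
        rcases Finset.mem_insert.1 this with rfl | h'
        · exact absurd hx hSa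
        · exact h'
      · have : x ∈ insert a S := hST.symm ▸ (Finset.mem_insert_of_mem hx)
        rcases Finset.mem_insert.1 this with rfl | h'
        · exact absurd hx hTa
        · exact h' 

lemma Esym_nonneg (k a b : ℕ) : 0 ≤ Esym k a b :=
  Finset.sum_nonneg fun S _ => Finset.prod_nonneg fun m _ => by positivity

lemma Esym_min (k b : ℕ) : ∀ n a, b ≤ a + n →
    Esym (k+1) a b = ∑ m ∈ Finset.Ico a b, (1/(m:ℝ)) * Esym k (m+1) b := by
  intro n
  induction n with
  | zero =>
    intro a h
    rw [Esym_of_ge (by omega) (Nat.succ_ne_zero k), Finset.Ico_eq_empty (by omega),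
      Finset.sum_empty]
  | succ n ih =>
    intro a h
    by_cases hab : b ≤ a
    · rw [Esym_of_ge hab (Nat.succ_ne_zero k), Finset.Ico_eq_empty (by omega), Finset.sum_empty]
    · push_neg at hab
      rw [Esym_succ_left hab, ih (a+1) (by omega), ← Finset.insert_Ico_add_one_left_eq_Ico hab,
        Finset.sum_insert (by simp)]

lemma Esym_le (k b : ℕ) : ∀ a, Esym k a b ≤ (∑ m ∈ Finset.Ico a b, (1/(m:ℝ)))^k := by
  induction k with
  | zero => intro a; simp [Esym_zero]
  | succ k ih =>
    intro a
    have hsum_nonneg : ∀ a' : ℕ, 0 ≤ ∑ m ∈ Finset.Ico a' b, (1/(m:ℝ)) :=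
      fun a' => Finset.sum_nonneg fun m _ => by positivity
    rw [Esym_min k b (b) a (by omega), pow_succ']
    calc ∑ m ∈ Finset.Ico a b, (1/(m:ℝ)) * Esym k (m+1) b
        ≤ ∑ m ∈ Finset.Ico a b, (1/(m:ℝ)) * (∑ m' ∈ Finset.Ico a b, (1/(m':ℝ)))^k := by
          refine Finset.sum_le_sum fun m hm => ?_
          refine mul_le_mul_of_nonneg_left ?_ (by positivity)
          refine le_trans (ih (m+1)) (pow_le_pow_left₀ (hsum_nonneg (m+1)) ?_ k)
          refine Finset.sum_le_sum_of_subset_of_nonneg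
            (Finset.Ico_subset_Ico (by exact (Finset.mem_Ico.1 hm).1.trans (Nat.le_succ _)) le_rfl)
            (fun m' _ _ => by positivity)
      _ = (∑ m ∈ Finset.Ico a b, (1/(m:ℝ))) * (∑ m' ∈ Finset.Ico a b, (1/(m':ℝ)))^k := by
          rw [← Finset.sum_mul]

lemma harmonic_le' (M : ℕ) : ∑ m ∈ Finset.Ico 1 (M+1), (1/(m:ℝ)) ≤ 1 + Real.log M := by
  induction M with
  | zero => simp
  | succ M ih =>
    by_cases hM : M = 0
    · subst hM
      norm_num [show Finset.Ico 1 2 = {1} from rfl, Real.log_one]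
    · have hM1 : (1:ℝ) ≤ (M:ℝ) := by exact_mod_cast Nat.one_le_iff_ne_zero.2 hM
      have hMpos : (0:ℝ) < M := by linarith
      rw [Finset.sum_Ico_succ_top (by omega)]
      have hlog : (1/((M:ℝ)+1)) ≤ Real.log ((M:ℝ)+1) - Real.log M := by
        have h1 : Real.log ((M:ℝ)/((M:ℝ)+1)) ≤ (M:ℝ)/((M:ℝ)+1) - 1 :=
          Real.log_le_sub_one_of_pos (by positivity)
        rw [Real.log_div (by positivity) (by positivity)] at h1
        have h2 : (M:ℝ)/((M:ℝ)+1) - 1 = -(1/((M:ℝ)+1)) := by field_simp; ring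
        linarith [h1, h2.le, h2.ge]
      have := add_le_add ih hlog
      push_cast at this ⊢
      linarith [this]

lemma harmonic_le (M : ℕ) : ∑ m ∈ Finset.Ico 1 M, (1/(m:ℝ)) ≤ 1 + Real.log M := by
  cases M with
  | zero => simp
  | succ N =>
    refine le_trans (harmonic_le' N) ?_
    have : Real.log N ≤ Real.log (N+1) := by
      cases N with
      | zero => simp
      | succ N' =>
        apply Real.log_le_log (by positivity)
        push_cast; linarith
    push_cast
    linarith

lemma sum_Ico_cast (m : ℕ) : ∑ s ∈ Finset.Ico 1 (m+1), (s:ℝ) = (m:ℝ)*((m:ℝ)+1)/2 := by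
  have h1 : (∑ s ∈ Finset.Ico 1 (m+1), s) = ∑ s ∈ Finset.range (m+1), s := by
    rw [Finset.range_eq_Ico, ← Finset.insert_Ico_add_one_left_eq_Ico (Nat.succ_pos m),
      Finset.sum_insert (by simp)]
    simp [Nat.succ_eq_add_one]
  have h2 : (∑ s ∈ Finset.range (m+1), s) * 2 = (m+1) * m := Finset.sum_range_id_mul_two (m+1)
  have h3 : ((∑ s ∈ Finset.Ico 1 (m+1), s : ℕ) : ℝ) * 2 = ((m:ℝ)+1) * m := by
    rw [h1]; exact_mod_cast congrArg (Nat.cast (R := ℝ)) h2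
  have h4 : ((∑ s ∈ Finset.Ico 1 (m+1), s : ℕ) : ℝ) = ∑ s ∈ Finset.Ico 1 (m+1), (s:ℝ) := by
    push_cast; ring_nf
  linarith [h3, h4.ge, h4.le]

noncomputable def Gs (j M : ℕ) : ℝ := ∑ s ∈ Finset.Ico 1 M, (s:ℝ) * Esym j s M

lemma Esym_diag (j M : ℕ) : Esym j M M = if j = 0 then 1 else 0 := by
  cases j with
  | zero => simp [Esym_zero]
  | succ j => simp [Esym_of_ge le_rfl (Nat.succ_ne_zero j)]

lemma Gs_rec (j M : ℕ) (hM : 1 ≤ M) :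
    Gs (j+1) M = (1/2) * (Gs j M - Esym j 1 M + (if j = 0 then (M:ℝ) else 0)) := by
  have step1 : Gs (j+1) M
      = ∑ s ∈ Finset.Ico 1 M, ∑ m ∈ Finset.Ico s M, (s:ℝ) * ((1/(m:ℝ)) * Esym j (m+1) M) := by
    refine Finset.sum_congr rfl fun s _ => ?_
    rw [Esym_min j M M s (by omega), Finset.mul_sum]
  have step2 : Gs (j+1) M
      = ∑ m ∈ Finset.Ico 1 M, ((m:ℝ)+1)/2 * Esym j (m+1) M := by
    rw [step1, Finset.sum_Ico_Ico_comm]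
    refine Finset.sum_congr rfl fun m hm => ?_
    have hm1 : 1 ≤ m := (Finset.mem_Ico.1 hm).1
    have hmR : (1:ℝ) ≤ (m:ℝ) := by exact_mod_cast hm1
    rw [← Finset.sum_mul, sum_Ico_cast m]
    have hmne : (m:ℝ) ≠ 0 := by linarith
    field_simp
  have step3 : Gs (j+1) M = (1/2) * ∑ u ∈ Finset.Ico 2 (M+1), (u:ℝ) * Esym j u M := by
    rw [step2, Finset.mul_sum, Finset.sum_Ico_eq_sum_range, Finset.sum_Ico_eq_sum_range]
    have hr : M + 1 - 2 = M - 1 := by omega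
    rw [hr]
    refine Finset.sum_congr rfl fun i _ => ?_
    have h12 : 1 + i + 1 = 2 + i := by omega
    rw [h12]
    push_cast
    ring
  have step4 : ∑ u ∈ Finset.Ico 1 (M+1), (u:ℝ) * Esym j u M
      = 1 * Esym j 1 M + ∑ u ∈ Finset.Ico 2 (M+1), (u:ℝ) * Esym j u M := by
    rw [← Finset.insert_Ico_add_one_left_eq_Ico (by omega : 1 < M+1), Finset.sum_insert (by simp)]
    norm_num
  have step5 : ∑ u ∈ Finset.Ico 1 (M+1), (u:ℝ) * Esym j u M
      = Gs j M + (M:ℝ) * Esym j M M := by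
    rw [Finset.sum_Ico_succ_top (by omega : 1 ≤ M)]
    rfl
  rw [step3, Esym_diag] at *
  rw [step5] at step4
  by_cases hj : j = 0 <;> simp [hj] at step4 ⊢ <;> linarith [step4]

open Filter Topology

lemma log_pow_div_sq_tendsto (j : ℕ) :
    Tendsto (fun M : ℕ => (1 + Real.log M)^j / (M:ℝ)^2) atTop (𝓝 0) := by
  have h1 : Tendsto (fun x : ℝ => (Real.log x)^j / (1*x+0)) atTop (𝓝 0) :=
    Real.tendsto_pow_log_div_mul_add_atTop 1 0 j one_ne_zero
  have h2 : Tendsto (fun M : ℕ => (Real.log M)^j / (M:ℝ)) atTop (𝓝 0) := by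
    have := h1.comp tendsto_natCast_atTop_atTop (α := ℕ)
    simpa [Function.comp_def] using this
  have h3 : Tendsto (fun M : ℕ => (2:ℝ)^j * ((Real.log M)^j / (M:ℝ))) atTop (𝓝 0) := by
    simpa using h2.const_mul ((2:ℝ)^j)
  refine tendsto_of_tendsto_of_tendsto_of_le_of_le' tendsto_const_nhds h3 ?_ ?_
  · filter_upwards [eventually_ge_atTop 1] with M hM
    have : (0:ℝ) < (M:ℝ) := by exact_mod_cast hM
    positivity
  · filter_upwards [eventually_ge_atTop 3] with M hM
    have hM3 : (3:ℝ) ≤ (M:ℝ) := by exact_mod_cast hM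
    have hMpos : (0:ℝ) < (M:ℝ) := by linarith
    have hlog1 : (1:ℝ) ≤ Real.log M := by
      rw [Real.le_log_iff_exp_le hMpos]
      calc Real.exp 1 ≤ 2.7182818286 := (Real.exp_one_lt_d9).le
        _ ≤ (M:ℝ) := by linarith
    have hnum : (1 + Real.log M)^j ≤ (2:ℝ)^j * (Real.log M)^j := by
      rw [← mul_pow]
      exact pow_le_pow_left₀ (by linarith) (by linarith) j
    have hMsq : (M:ℝ) ≤ (M:ℝ)^2 := by nlinarith
    calc (1 + Real.log M)^j / (M:ℝ)^2 ≤ ((2:ℝ)^j * (Real.log M)^j) / (M:ℝ)^2 := by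
          apply div_le_div_of_nonneg_right hnum (by positivity)
      _ ≤ ((2:ℝ)^j * (Real.log M)^j) / (M:ℝ) := by
          apply div_le_div_of_nonneg_left ?_ hMpos hMsq
          positivity
      _ = (2:ℝ)^j * ((Real.log M)^j / (M:ℝ)) := by ring

lemma Esym_div_sq_tendsto (j : ℕ) :
    Tendsto (fun M : ℕ => Esym j 1 M / (M:ℝ)^2) atTop (𝓝 0) := by
  refine tendsto_of_tendsto_of_tendsto_of_le_of_le' tendsto_const_nhds
    (log_pow_div_sq_tendsto j) ?_ ?_
  · filter_upwards [eventually_ge_atTop 1] with M hM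
    have : (0:ℝ) < (M:ℝ) := by exact_mod_cast hM
    have := Esym_nonneg j 1 M
    positivity
  · filter_upwards [eventually_ge_atTop 1] with M hM
    have hMpos : (0:ℝ) < (M:ℝ) := by exact_mod_cast hM
    apply div_le_div_of_nonneg_right ?_ (by positivity)
    refine le_trans (Esym_le j M 1) ?_
    refine pow_le_pow_left₀ (Finset.sum_nonneg fun m _ => by positivity) ?_ j
    exact harmonic_le M

lemma Gs_zero_eq (M : ℕ) (hM : 1 ≤ M) : Gs 0 M = ((M:ℝ)-1)*(M:ℝ)/2 := by
  obtain ⟨N, rfl⟩ : ∃ N, M = N + 1 := ⟨M - 1, by omega⟩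
  have : Gs 0 (N+1) = ∑ s ∈ Finset.Ico 1 (N+1), (s:ℝ) := by
    unfold Gs
    refine Finset.sum_congr rfl fun s _ => by rw [Esym_zero, mul_one]
  rw [this, sum_Ico_cast N]
  push_cast
  ring

lemma Gs_tendsto (j : ℕ) :
    Tendsto (fun M : ℕ => Gs j M / (M:ℝ)^2) atTop (𝓝 ((1/2:ℝ)^(j+1))) := by
  induction j with
  | zero =>
    have hev : ∀ᶠ M : ℕ in atTop, (1 - 1/(M:ℝ))/2 = Gs 0 M / (M:ℝ)^2 := by
      filter_upwards [eventually_ge_atTop 1] with M hM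
      have hMpos : (0:ℝ) < (M:ℝ) := by exact_mod_cast hM
      rw [Gs_zero_eq M hM]
      field_simp
    have : Tendsto (fun M : ℕ => ((1:ℝ) - 1/(M:ℝ))/2) atTop (𝓝 ((1-0)/2)) :=
      ((tendsto_const_nhds.sub tendsto_one_div_atTop_nhds_zero_nat).div_const 2)
    have h2 := Tendsto.congr' hev this
    convert h2 using 2
    norm_num
  | succ j ih =>
    have hev : ∀ᶠ M : ℕ in atTop,
        (1/2) * (Gs j M / (M:ℝ)^2 - Esym j 1 M / (M:ℝ)^2
          + (if j = 0 then (M:ℝ) else 0)/(M:ℝ)^2) = Gs (j+1) M / (M:ℝ)^2 := by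
      filter_upwards [eventually_ge_atTop 1] with M hM
      have hMpos : (0:ℝ) < (M:ℝ) := by exact_mod_cast hM
      rw [Gs_rec j M hM]
      ring
    have h3 : Tendsto (fun M : ℕ => (if j = 0 then (M:ℝ) else 0)/(M:ℝ)^2) atTop (𝓝 0) := by
      by_cases hj : j = 0
      · simp only [hj, if_true]
        have hev2 : ∀ᶠ M : ℕ in atTop, 1/(M:ℝ) = (M:ℝ)/(M:ℝ)^2 := by
          filter_upwards [eventually_ge_atTop 1] with M hM
          have hMpos : (0:ℝ) < (M:ℝ) := by exact_mod_cast hM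
          field_simp
        exact Tendsto.congr' hev2 tendsto_one_div_atTop_nhds_zero_nat
      · simp only [hj, if_false]
        simpa using tendsto_const_nhds (x := (0:ℝ)) (f := atTop (α := ℕ))
    have := (((ih.sub (Esym_div_sq_tendsto j)).add h3).const_mul (1/2:ℝ)).congr' hev
    convert this using 2
    ring

section Comb

variable {M : ℕ}

lemma card_filter_le_fin (x : Fin M) :
    (Finset.univ.filter (fun y : Fin M => x ≤ y)).card = M - x.val := by
  have h : Finset.univ.filter (fun y : Fin M => x ≤ y) = Finset.Ici x := by
    ext y; simp [Finset.mem_Ici]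
  rw [h, Fin.card_Ici]

lemma card_u1 (i x : Fin M) :
    (Finset.univ.filter (fun y : Fin M => x ≤ y ∧ y = i)).card
      = if x ≤ i then 1 else 0 := by
  by_cases h : x ≤ i
  · have : Finset.univ.filter (fun y : Fin M => x ≤ y ∧ y = i) = {i} := by
      ext y
      simp only [Finset.mem_filter, Finset.mem_univ, true_and, Finset.mem_singleton]
      exact ⟨fun hy => hy.2, fun hy => ⟨hy ▸ h, hy⟩⟩
    rw [this, if_pos h, Finset.card_singleton]
  · have : Finset.univ.filter (fun y : Fin M => x ≤ y ∧ y = i) = ∅ := by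
      ext y
      simp only [Finset.mem_filter, Finset.mem_univ, true_and, Finset.notMem_empty, iff_false]
      rintro ⟨h1, rfl⟩; exact h h1
    rw [this, if_neg h, Finset.card_empty]

lemma card_u2 (i x : Fin M) :
    (Finset.univ.filter (fun y : Fin M => x ≤ y ∧ y ≠ i)).card
      = (M - x.val) - (if x ≤ i then 1 else 0) := by
  classical
  have key := Finset.card_filter_add_card_filter_not
    (s := Finset.univ.filter (fun y : Fin M => x ≤ y)) (p := fun y => y = i)
  rw [Finset.filter_filter, Finset.filter_filter] at key
  rw [card_filter_le_fin] at key
  have h1 : (Finset.univ.filter (fun y : Fin M => x ≤ y ∧ y = i)).card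
      = if x ≤ i then 1 else 0 := card_u1 i x
  have h2 : (Finset.univ.filter (fun y : Fin M => x ≤ y ∧ ¬(y = i)))
      = (Finset.univ.filter (fun y : Fin M => x ≤ y ∧ y ≠ i)) := by rfl
  rw [h2, h1] at key
  omega

lemma prod_M_sub_fin (M : ℕ) : (∏ x : Fin M, (M - x.val)) = Nat.factorial M := by
  rw [Fin.prod_univ_eq_prod_range (fun v => M - v) M]
  rw [← Finset.prod_range_add_one_eq_factorial]
  rw [← Finset.prod_range_reflect (fun v => v + 1) M]
  refine Finset.prod_congr rfl fun v hv => ?_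
  have := Finset.mem_range.1 hv
  omega

lemma prod_tel_nat (M : ℕ) : ∀ n, n + 1 < M →
    (∏ v ∈ Finset.range (n+1), (((M-1-v : ℕ):ℝ)/((M-v : ℕ):ℝ)))
      = ((M-1-n : ℕ):ℝ)/(M:ℝ) := by
  intro n
  induction n with
  | zero =>
    intro h
    simp only [Finset.range_one, Finset.prod_singleton, Nat.sub_zero]
    norm_num
  | succ n ih =>
    intro h
    rw [Finset.prod_range_succ, ih (by omega)]
    have e1 : M - 1 - n = M - n - 1 := by omega
    have e2 : M - 1 - (n+1) = M - n - 2 := by omega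
    have e3 : M - (n+1) = M - n - 1 := by omega
    rw [e1, e2, e3]
    have hne : ((M - n - 1 : ℕ):ℝ) ≠ 0 := by
      rw [Nat.cast_ne_zero]; omega
    calc ((M-n-1:ℕ):ℝ)/M * (((M-n-2:ℕ):ℝ)/((M-n-1:ℕ):ℝ))
        = ((M-n-2:ℕ):ℝ)/M * (((M-n-1:ℕ):ℝ)/((M-n-1:ℕ):ℝ)) := by ring
      _ = ((M-n-2:ℕ):ℝ)/M := by rw [div_self hne, mul_one]
end Comb

section Comb2

variable {M : ℕ}

lemma prod_tel_fin (i : Fin M) (hi : i.val + 1 < M) :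
    (∏ x ∈ Finset.univ.filter (fun x : Fin M => x ≤ i),
      (((M-1-x.val : ℕ):ℝ)/((M-x.val : ℕ):ℝ)))
      = ((M-1-i.val : ℕ):ℝ)/(M:ℝ) := by
  rw [Finset.prod_filter]
  have h1 : (∏ x : Fin M, if x ≤ i then (((M-1-x.val : ℕ):ℝ)/((M-x.val : ℕ):ℝ)) else 1)
      = ∏ v ∈ Finset.range M, (if v ≤ i.val then (((M-1-v : ℕ):ℝ)/((M-v : ℕ):ℝ)) else 1) := by
    rw [← Fin.prod_univ_eq_prod_range (fun v => if v ≤ i.val then (((M-1-v : ℕ):ℝ)/((M-v : ℕ):ℝ)) else 1) M]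
    refine Finset.prod_congr rfl fun x _ => ?_
    by_cases h : x ≤ i
    · rw [if_pos h, if_pos (by exact h)]
    · rw [if_neg h, if_neg (fun hc => h (by exact hc))]
  rw [h1, ← Finset.prod_filter]
  have h2 : (Finset.range M).filter (fun v => v ≤ i.val) = Finset.range (i.val + 1) := by
    ext v
    simp only [Finset.mem_filter, Finset.mem_range]
    omega
  rw [h2, prod_tel_nat M i.val hi]

theorem embNat_inj (M : ℕ) : Function.Injective (fun x : Fin M => M - 1 - x.val) := by
    intro x y h
    have h2 : M - 1 - x.val = M - 1 - y.val := h
    have hx := x.isLt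
    have hy := y.isLt
    exact Fin.ext (by omega)

def embNat (M : ℕ) : Fin M ↪ ℕ :=
  ⟨fun x => M - 1 - x.val, embNat_inj M⟩

lemma embNat_image_le (i : Fin M) :
    (Finset.univ.filter (fun x : Fin M => x ≤ i)).map (embNat M) =
      Finset.Ico (M - 1 - i.val) M := by
  ext n
  simp only [Finset.mem_map, Finset.mem_filter, Finset.mem_univ, true_and, embNat,
    Function.Embedding.coeFn_mk, Finset.mem_Ico]
  constructor
  · rintro ⟨x, hx, rfl⟩
    have := x.isLt
    have hxi : x.val ≤ i.val := hx
    omega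
  · rintro ⟨h1, h2⟩
    have hiM := i.isLt
    refine ⟨⟨M - 1 - n, by omega⟩, ?_, by simp; omega⟩
    show (M - 1 - n : ℕ) ≤ i.val
    omega

lemma embNat_image_erase (hM : 1 ≤ M) :
    ((Finset.univ.erase (⟨M-1, by omega⟩ : Fin M)).map (embNat M)) = Finset.Ico 1 M := by
  ext n
  simp only [Finset.mem_map, Finset.mem_erase, Finset.mem_univ, and_true, embNat,
    Function.Embedding.coeFn_mk, Finset.mem_Ico]
  constructor
  · rintro ⟨x, hx, rfl⟩
    have := x.isLt
    have hne : x.val ≠ M - 1 := fun hc => hx (Fin.ext hc)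
    omega
  · rintro ⟨h1, h2⟩
    refine ⟨⟨M - 1 - n, by omega⟩, ?_, by simp; omega⟩
    intro hc
    have := congrArg Fin.val hc
    simp at this
    omega

lemma Esym_reindex (j : ℕ) (i : Fin M) :
    Esym j (M - 1 - i.val) M
      = ∑ S ∈ (Finset.univ.filter (fun x : Fin M => x ≤ i)).powersetCard j,
          ∏ x ∈ S, (1/((M-1-x.val : ℕ):ℝ)) := by
  rw [Esym, ← embNat_image_le i, Finset.powersetCard_map, Finset.sum_map]
  refine Finset.sum_congr rfl fun S _ => ?_
  have : (Finset.mapEmbedding (embNat M)).toEmbedding S = S.map (embNat M) :=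
    Finset.mapEmbedding_apply
  rw [this, Finset.prod_map]
  rfl

end Comb2

section Comb3

variable {M : ℕ}

def uCard (i : Fin M) (S : Finset (Fin M)) (x : Fin M) : ℕ :=
  if x ∈ S then (if x ≤ i then 1 else 0) else (M - x.val - if x ≤ i then 1 else 0)

def NsetCard (M j : ℕ) (i : Fin M) : ℕ :=
  ((Finset.univ.filter (fun f : Fin M → Fin M => ∀ x, x ≤ f x)).filter
    (fun f => (Finset.univ.filter (fun x => f x = i)).card = j)).card

lemma NsetCard_eq (j : ℕ) (i : Fin M) :
    NsetCard M j i = ∑ S ∈ (Finset.univ : Finset (Fin M)).powersetCard j,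
      ∏ x : Fin M, uCard i S x := by
  classical
  have hmaps : ∀ f ∈ (Finset.univ.filter (fun f : Fin M → Fin M => ∀ x, x ≤ f x)).filter
      (fun f => (Finset.univ.filter (fun x => f x = i)).card = j),
      (Finset.univ.filter (fun x => f x = i)) ∈ (Finset.univ : Finset (Fin M)).powersetCard j :=
    fun f hf => Finset.mem_powersetCard.2 ⟨Finset.subset_univ _, (Finset.mem_filter.1 hf).2⟩
  rw [NsetCard, Finset.card_eq_sum_card_fiberwise hmaps]
  refine Finset.sum_congr rfl fun S hS => ?_
  have hcardS : S.card = j := (Finset.mem_powersetCard.1 hS).2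
  have hfib : (((Finset.univ.filter (fun f : Fin M → Fin M => ∀ x, x ≤ f x)).filter
      (fun f => (Finset.univ.filter (fun x => f x = i)).card = j)).filter
      (fun f => Finset.univ.filter (fun x => f x = i) = S))
      = Fintype.piFinset (fun x => if x ∈ S
          then Finset.univ.filter (fun y : Fin M => x ≤ y ∧ y = i)
          else Finset.univ.filter (fun y : Fin M => x ≤ y ∧ y ≠ i)) := by
    ext f
    simp only [Finset.mem_filter, Finset.mem_univ, true_and, Fintype.mem_piFinset]
    constructor
    · rintro ⟨⟨hrc, _⟩, hfib⟩ x
      have hxi : f x = i ↔ x ∈ S := by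
        rw [← hfib]; simp
      by_cases hx : x ∈ S
      · rw [if_pos hx]
        simp only [Finset.mem_filter, Finset.mem_univ, true_and]
        exact ⟨hrc x, hxi.2 hx⟩
      · rw [if_neg hx]
        simp only [Finset.mem_filter, Finset.mem_univ, true_and]
        exact ⟨hrc x, fun hc => hx (hxi.1 hc)⟩
    · intro h
      have key : ∀ x, x ≤ f x ∧ (f x = i ↔ x ∈ S) := by
        intro x
        have hx := h x
        by_cases hxS : x ∈ S
        · rw [if_pos hxS] at hx
          simp only [Finset.mem_filter, Finset.mem_univ, true_and] at hx
          exact ⟨hx.1, by simp [hx.2, hxS]⟩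
        · rw [if_neg hxS] at hx
          simp only [Finset.mem_filter, Finset.mem_univ, true_and] at hx
          exact ⟨hx.1, by simp [hx.2, hxS]⟩
      have hset : Finset.univ.filter (fun x => f x = i) = S := by
        ext y
        simp only [Finset.mem_filter, Finset.mem_univ, true_and]
        exact (key y).2
      exact ⟨⟨fun x => (key x).1, by rw [hset, hcardS]⟩, hset⟩
  rw [hfib, Fintype.card_piFinset]
  refine Finset.prod_congr rfl fun x _ => ?_
  by_cases hx : x ∈ S
  · rw [if_pos hx, uCard, if_pos hx, card_u1]
  · rw [if_neg hx, uCard, if_neg hx, card_u2]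

end Comb3

section Comb4

variable {M : ℕ}

lemma prod_u_real (i : Fin M) (hi : i.val + 1 < M) (S : Finset (Fin M))
    (hS : S ⊆ Finset.univ.filter (fun x : Fin M => x ≤ i)) :
    (∏ x : Fin M, ((uCard i S x : ℕ):ℝ))
      = (Nat.factorial M : ℝ) * ((((M-1-i.val:ℕ)):ℝ)/(M:ℝ))
        * ∏ x ∈ S, (1/((M-1-x.val:ℕ):ℝ)) := by
  have hfact : ∀ x : Fin M, ((uCard i S x : ℕ):ℝ)
      = ((M - x.val : ℕ):ℝ) * ((if x ≤ i then ((M-1-x.val:ℕ):ℝ)/((M-x.val:ℕ):ℝ) else 1)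
          * (if x ∈ S then 1/((M-1-x.val:ℕ):ℝ) else 1)) := by
    intro x
    have hxM := x.isLt
    have hMx : ((M - x.val : ℕ):ℝ) ≠ 0 := by rw [Nat.cast_ne_zero]; omega
    by_cases hx : x ∈ S
    · have hxi : x ≤ i := (Finset.mem_filter.1 (hS hx)).2
      have hxival : x.val ≤ i.val := hxi
      have hM1x : ((M - 1 - x.val : ℕ):ℝ) ≠ 0 := by rw [Nat.cast_ne_zero]; omega
      rw [uCard, if_pos hx, if_pos hxi, if_pos hxi, if_pos hx]
      have hA : ((M:ℝ) - (x.val:ℝ)) ≠ 0 := by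
        have : ((x.val:ℝ)) < (M:ℝ) := by exact_mod_cast hxM
        exact ne_of_gt (by linarith)
      field_simp
      norm_num
    · by_cases hxi : x ≤ i
      · have hxival : x.val ≤ i.val := hxi
        rw [uCard, if_neg hx, if_pos hxi, if_pos hxi, if_neg hx, mul_one]
        have he : (M - x.val - 1 : ℕ) = (M - 1 - x.val : ℕ) := by omega
        rw [he]
        have hA : ((M:ℝ) - (x.val:ℝ)) ≠ 0 := by
          have : ((x.val:ℝ)) < (M:ℝ) := by exact_mod_cast hxM
          exact ne_of_gt (by linarith)
        field_simp
      · rw [uCard, if_neg hx, if_neg hxi, if_neg hxi, if_neg hx, mul_one, mul_one,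
          Nat.sub_zero]
  rw [Finset.prod_congr rfl (fun x _ => hfact x), Finset.prod_mul_distrib,
    Finset.prod_mul_distrib]
  have h1 : (∏ x : Fin M, ((M - x.val : ℕ):ℝ)) = (Nat.factorial M : ℝ) := by
    rw [← Nat.cast_prod, prod_M_sub_fin]
  have h2 : (∏ x : Fin M, (if x ≤ i then ((M-1-x.val:ℕ):ℝ)/((M-x.val:ℕ):ℝ) else 1))
      = (((M-1-i.val:ℕ)):ℝ)/(M:ℝ) := by
    rw [← Finset.prod_filter, prod_tel_fin i hi]
  have h3 : (∏ x : Fin M, (if x ∈ S then 1/((M-1-x.val:ℕ):ℝ) else 1))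
      = ∏ x ∈ S, (1/((M-1-x.val:ℕ):ℝ)) := by
    rw [Finset.prod_ite_mem Finset.univ S, Finset.univ_inter]
  rw [h1, h2, h3, mul_assoc]

lemma NsetCard_real (j : ℕ) (i : Fin M) (hi : i.val + 1 < M) :
    ((NsetCard M j i : ℕ):ℝ)
      = (Nat.factorial M : ℝ) * ((((M-1-i.val:ℕ)):ℝ)/(M:ℝ)) * Esym j (M-1-i.val) M := by
  classical
  rw [NsetCard_eq, Nat.cast_sum]
  have hrestrict : ∑ S ∈ (Finset.univ : Finset (Fin M)).powersetCard j,
        ((∏ x : Fin M, uCard i S x : ℕ):ℝ)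
      = ∑ S ∈ (Finset.univ.filter (fun x : Fin M => x ≤ i)).powersetCard j,
        ((∏ x : Fin M, uCard i S x : ℕ):ℝ) := by
    refine (Finset.sum_subset
      (Finset.powersetCard_mono (Finset.subset_univ _)) ?_).symm
    intro S hS hS'
    have hcard : S.card = j := (Finset.mem_powersetCard.1 hS).2
    have hnsub : ¬ S ⊆ Finset.univ.filter (fun x : Fin M => x ≤ i) := by
      intro hc
      exact hS' (Finset.mem_powersetCard.2 ⟨hc, hcard⟩)
    obtain ⟨x, hxS, hxn⟩ := Finset.not_subset.1 hnsub
    have hxi : ¬ x ≤ i := by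
      intro hc
      exact hxn (Finset.mem_filter.2 ⟨Finset.mem_univ x, hc⟩)
    rw [Nat.cast_prod]
    refine Finset.prod_eq_zero (Finset.mem_univ x) ?_
    rw [uCard, if_pos hxS, if_neg hxi]
    norm_num
  rw [hrestrict, Esym_reindex j i, Finset.mul_sum]
  refine Finset.sum_congr rfl fun S hS => ?_
  have hsub : S ⊆ Finset.univ.filter (fun x : Fin M => x ≤ i) :=
    (Finset.mem_powersetCard.1 hS).1
  rw [Nat.cast_prod]
  exact prod_u_real i hi S hsub

end Comb4

section Final

lemma sum_count_eq (M j : ℕ) :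
    (∑ f ∈ Finset.univ.filter (fun f : Fin M → Fin M => ∀ x, x ≤ f x),
      (Finset.univ.filter (fun i : Fin M =>
        (Finset.univ.filter (fun x => f x = i)).card = j)).card)
    = ∑ i : Fin M, NsetCard M j i := by
  classical
  have h1 : ∀ f : Fin M → Fin M,
      (Finset.univ.filter (fun i : Fin M =>
        (Finset.univ.filter (fun x => f x = i)).card = j)).card
      = ∑ i : Fin M, if (Finset.univ.filter (fun x => f x = i)).card = j then 1 else 0 :=
    fun f => Finset.card_filter _ _
  rw [Finset.sum_congr rfl (fun f _ => h1 f), Finset.sum_comm]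
  refine Finset.sum_congr rfl fun i _ => ?_
  rw [NsetCard, Finset.card_filter]

lemma card_rc (M : ℕ) :
    (Finset.univ.filter (fun f : Fin M → Fin M => ∀ x, x ≤ f x)).card = Nat.factorial M := by
  classical
  have h : Finset.univ.filter (fun f : Fin M → Fin M => ∀ x, x ≤ f x)
      = Fintype.piFinset (fun x : Fin M => Finset.univ.filter (fun y => x ≤ y)) := by
    ext f
    simp [Fintype.mem_piFinset]
  rw [h, Fintype.card_piFinset]
  calc (∏ x : Fin M, (Finset.univ.filter (fun y : Fin M => x ≤ y)).card)
      = ∏ x : Fin M, (M - x.val) := by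
        exact Finset.prod_congr rfl fun x _ => card_filter_le_fin x
    _ = Nat.factorial M := prod_M_sub_fin M

lemma NsetCard_le (M j : ℕ) (i : Fin M) : NsetCard M j i ≤ Nat.factorial M := by
  rw [NsetCard, ← card_rc M]
  exact Finset.card_le_card (Finset.filter_subset _ _)

lemma sum_Nset (M j : ℕ) (hM : 1 ≤ M) :
    ∑ i : Fin M, ((NsetCard M j i : ℕ):ℝ)
      = ((NsetCard M j ⟨M-1, by omega⟩ : ℕ):ℝ)
        + (Nat.factorial M : ℝ)/(M:ℝ) * Gs j M := by
  rw [← Finset.add_sum_erase _ _ (Finset.mem_univ (⟨M-1, by omega⟩ : Fin M))]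
  congr 1
  have hstep : ∀ i ∈ Finset.univ.erase (⟨M-1, by omega⟩ : Fin M),
      ((NsetCard M j i : ℕ):ℝ)
      = (fun n : ℕ => (Nat.factorial M : ℝ) * ((n:ℝ)/(M:ℝ)) * Esym j n M) (embNat M i) := by
    intro i hi
    have hne : i ≠ (⟨M-1, by omega⟩ : Fin M) := (Finset.mem_erase.1 hi).1
    have hvne : i.val ≠ M - 1 := fun hc => hne (Fin.ext (by simp [hc]))
    have hilt : i.val + 1 < M := by
      have := i.isLt
      omega
    exact NsetCard_real j i hilt
  rw [Finset.sum_congr rfl hstep]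
  have hmap := Finset.sum_map (Finset.univ.erase (⟨M-1, by omega⟩ : Fin M)) (embNat M)
      (fun n : ℕ => (Nat.factorial M : ℝ) * ((n:ℝ)/(M:ℝ)) * Esym j n M)
  rw [embNat_image_erase hM] at hmap
  refine hmap.symm.trans ?_
  rw [Gs, Finset.mul_sum]
  exact Finset.sum_congr rfl fun s _ => by ring

end Final

/-- For fixed `k ≥ 1`, the asymptotic fraction of vertices of degree `k`
(in-degree `k-1`) in a uniformly random ranking-compatible map is `2^{-k}`. -/
theorem stmt18 (k : ℕ) (hk : 1 ≤ k) :
    Filter.Tendsto (fun M : ℕ =>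
        (∑ f ∈ Finset.univ.filter (fun f : Fin M → Fin M => ∀ i : Fin M, i ≤ f i),
            ((Finset.univ.filter (fun i : Fin M =>
              (Finset.univ.filter (fun x : Fin M => f x = i)).card = k - 1)).card : ℝ))
          / ((M : ℝ) * (Nat.factorial M : ℝ)))
      Filter.atTop
      (nhds ((1 / 2 : ℝ) ^ k)) := by
  set j := k - 1 with hj
  set A : ℕ → ℝ := fun M : ℕ =>
        (∑ f ∈ Finset.univ.filter (fun f : Fin M → Fin M => ∀ i : Fin M, i ≤ f i),
            ((Finset.univ.filter (fun i : Fin M =>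
              (Finset.univ.filter (fun x : Fin M => f x = i)).card = k - 1)).card : ℝ))
          / ((M : ℝ) * (Nat.factorial M : ℝ)) with hA
  have hAeq : ∀ (M : ℕ) (hM : 1 ≤ M),
      A M = ((NsetCard M j ⟨M-1, by omega⟩ : ℕ):ℝ)/((M:ℝ)*(Nat.factorial M : ℝ))
        + Gs j M/(M:ℝ)^2 := by
    intro M hM
    have hnum : (∑ f ∈ Finset.univ.filter (fun f : Fin M → Fin M => ∀ i : Fin M, i ≤ f i),
        ((Finset.univ.filter (fun i : Fin M =>
          (Finset.univ.filter (fun x : Fin M => f x = i)).card = k - 1)).card : ℝ))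
        = ((NsetCard M j ⟨M-1, by omega⟩ : ℕ):ℝ)
          + (Nat.factorial M : ℝ)/(M:ℝ) * Gs j M := by
      have h0 := congrArg (fun n : ℕ => (n : ℝ)) (sum_count_eq M j)
      push_cast at h0
      rw [h0, sum_Nset M j hM]
    rw [hA]
    simp only []
    rw [hnum]
    have hMne : ((M:ℝ)) ≠ 0 := by
      rw [Nat.cast_ne_zero]; omega
    have hFne : ((Nat.factorial M : ℕ):ℝ) ≠ 0 := by
      rw [Nat.cast_ne_zero]; exact (Nat.factorial_pos M).ne'
    field_simp
  have hdiff : Filter.Tendsto (fun M : ℕ => A M - Gs j M/(M:ℝ)^2) Filter.atTop (𝓝 0) := by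
    refine tendsto_of_tendsto_of_tendsto_of_le_of_le' tendsto_const_nhds
      tendsto_one_div_atTop_nhds_zero_nat ?_ ?_
    · filter_upwards [Filter.eventually_ge_atTop 1] with M hM
      rw [hAeq M hM]
      have hMpos : (0:ℝ) < (M:ℝ) := by exact_mod_cast hM
      have hFpos : (0:ℝ) < ((Nat.factorial M : ℕ):ℝ) := by
        exact_mod_cast Nat.factorial_pos M
      have : (0:ℝ) ≤ ((NsetCard M j ⟨M-1, by omega⟩ : ℕ):ℝ) := Nat.cast_nonneg _
      have h2 : (0:ℝ) ≤ ((NsetCard M j ⟨M-1, by omega⟩ : ℕ):ℝ)/((M:ℝ)*(Nat.factorial M : ℝ)) := by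
        positivity
      linarith
    · filter_upwards [Filter.eventually_ge_atTop 1] with M hM
      rw [hAeq M hM]
      have hMpos : (0:ℝ) < (M:ℝ) := by exact_mod_cast hM
      have hFpos : (0:ℝ) < ((Nat.factorial M : ℕ):ℝ) := by
        exact_mod_cast Nat.factorial_pos M
      have hle : ((NsetCard M j ⟨M-1, by omega⟩ : ℕ):ℝ) ≤ (Nat.factorial M : ℝ) := by
        exact_mod_cast NsetCard_le M j _
      have h2 : ((NsetCard M j ⟨M-1, by omega⟩ : ℕ):ℝ)/((M:ℝ)*(Nat.factorial M : ℝ))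
          ≤ (Nat.factorial M : ℝ)/((M:ℝ)*(Nat.factorial M : ℝ)) := by
        apply div_le_div_of_nonneg_right hle (by positivity)
      have h3 : (Nat.factorial M : ℝ)/((M:ℝ)*(Nat.factorial M : ℝ)) = 1/(M:ℝ) := by
        field_simp
      linarith
  have hfin := hdiff.add (Gs_tendsto j)
  have heq : (fun M : ℕ => (A M - Gs j M/(M:ℝ)^2) + Gs j M/(M:ℝ)^2) = A := by
    funext M; ring
  rw [heq] at hfin
  have hjk : j + 1 = k := by omega
  have : (0:ℝ) + (1/2:ℝ)^(j+1) = (1/2:ℝ)^k := by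
    rw [zero_add, hjk]
  rw [this] at hfin
  exact hfin
end

section
/- lim_{M→∞} (1/M) Σ_{j=1}^M Π_{i=1}^j (1 − 2(j−i+1)/((M−i+1)(M−i+2))) = (e² − 5)/4. Consequently, in the linear-rank random map model the asymptotic fraction of followers is n_1 = (e² − 5)/4 and the asymptotic fraction of experts is (9 − e²)/4. -/
set_option maxHeartbeats 1000000

open Finset Real Filter


open Finset Real

noncomputable def gfun (x : ℝ) : ℝ := Real.exp (2*x) * (1 - x)^2

lemma gfun_nonneg (x : ℝ) : 0 ≤ gfun x :=
  mul_nonneg (Real.exp_nonneg _) (sq_nonneg _)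

lemma exp_mul_one_sub_le {c u : ℝ} (hc0 : 0 ≤ c) (hc : c ≤ 1) (hu : 0 ≤ u) :
    Real.exp u * (c - u) ≤ c := by
  rcases le_or_gt c u with h | h
  · have : Real.exp u * (c - u) ≤ 0 :=
      mul_nonpos_of_nonneg_of_nonpos (Real.exp_nonneg _) (by linarith)
    linarith
  · -- u < c ≤ 1
    have hu1 : u < 1 := lt_of_lt_of_le h hc
    have h1 : 1 - u ≤ Real.exp (-u) := by
      have := Real.add_one_le_exp (-u); linarith
    have hepos : (0:ℝ) < Real.exp (-u) := Real.exp_pos _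
    have hexp : Real.exp u ≤ 1 / (1 - u) := by
      rw [le_div_iff₀ (by linarith)]
      calc Real.exp u * (1 - u) ≤ Real.exp u * Real.exp (-u) := by
            apply mul_le_mul_of_nonneg_left h1 (Real.exp_nonneg _)
        _ = 1 := by rw [← Real.exp_add]; simp
    have hcu : 0 < c - u := by linarith
    have : Real.exp u * (c - u) ≤ (1/(1-u)) * (c - u) :=
      mul_le_mul_of_nonneg_right hexp (le_of_lt hcu)
    have hfrac : (1/(1-u)) * (c - u) ≤ c := by
      rw [div_mul_eq_mul_div, div_le_iff₀ (by linarith)]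
      nlinarith
    linarith

lemma gfun_eq_sq (x : ℝ) : gfun x = (Real.exp x * (1 - x))^2 := by
  unfold gfun
  rw [mul_pow, sq (Real.exp x), ← Real.exp_add, two_mul]

lemma gfun_antitone {x y : ℝ} (hx : 0 ≤ x) (hxy : x ≤ y) (hy : y ≤ 1) :
    gfun y ≤ gfun x := by
  rw [gfun_eq_sq, gfun_eq_sq]
  have hyn : 0 ≤ Real.exp y * (1 - y) :=
    mul_nonneg (Real.exp_nonneg _) (by linarith)
  have key : Real.exp y * (1 - y) ≤ Real.exp x * (1 - x) := by
    have h := exp_mul_one_sub_le (c := 1 - x) (u := y - x) (by linarith) (by linarith) (by linarith)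
    have hsplit : Real.exp y = Real.exp x * Real.exp (y - x) := by
      rw [← Real.exp_add]; ring_nf
    calc Real.exp y * (1 - y) = Real.exp x * (Real.exp (y-x) * ((1-x) - (y-x))) := by
          rw [hsplit]; ring_nf
      _ ≤ Real.exp x * (1 - x) := by
          apply mul_le_mul_of_nonneg_left _ (Real.exp_nonneg _)
          convert h using 2
  exact pow_le_pow_left₀ hyn key 2

lemma gfun_integral : ∫ x in (0:ℝ)..1, gfun x = (Real.exp 2 - 5)/4 := by
  have hd : ∀ x ∈ Set.uIcc (0:ℝ) 1, HasDerivAt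
      (fun x : ℝ => Real.exp (2*x) * (x^2/2 - 3*x/2 + 5/4)) (gfun x) x := by
    intro x _
    have h1 : HasDerivAt (fun x : ℝ => Real.exp (2*x)) (Real.exp (2*x) * 2) x := by
      have := ((hasDerivAt_id x).const_mul 2).exp
      simpa using this
    have h2 : HasDerivAt (fun x : ℝ => x^2/2 - 3*x/2 + 5/4) (x - 3/2) x := by
      have hp : HasDerivAt (fun x : ℝ => x^2) (2*x) x := by
        simpa using hasDerivAt_pow 2 x
      have := ((hp.div_const 2).sub (((hasDerivAt_id x).const_mul 3).div_const 2)).add_const (5/4)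
      exact this.congr_deriv (by ring)
    have := h1.mul h2
    exact this.congr_deriv (by unfold gfun; ring)
  have hcont : ContinuousOn gfun (Set.uIcc (0:ℝ) 1) := by
    apply Continuous.continuousOn; unfold gfun; fun_prop
  have := intervalIntegral.integral_eq_sub_of_hasDerivAt hd
    (hcont.intervalIntegrable)
  rw [this]
  norm_num
  ring_nf

lemma exp_sub_sq_le {t : ℝ} (ht : 0 ≤ t) : Real.exp (t - t^2) ≤ 1 + t := by
  have h1t : (0:ℝ) < 1 + t := by linarith
  have hlog : 1 - (1+t)⁻¹ ≤ Real.log (1+t) := Real.one_sub_inv_le_log_of_pos h1t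
  have h2 : t - t^2 ≤ 1 - (1+t)⁻¹ := by
    have key : t - t^2 ≤ t/(1+t) := by
      rw [le_div_iff₀ h1t]; nlinarith
    have : 1 - (1+t)⁻¹ = t/(1+t) := by field_simp; ring
    rw [this]; exact key
  calc Real.exp (t - t^2) ≤ Real.exp (Real.log (1+t)) := Real.exp_le_exp.2 (h2.trans hlog)
    _ = 1 + t := Real.exp_log h1t


lemma telescope_prod' (h : ℕ → ℝ) : ∀ n : ℕ, (∀ k, k ≤ n → h k ≠ 0) →
    ∏ k ∈ Finset.range n, (h (k+1) / h k) = h n / h 0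
  | 0, hne => by simp [div_self (hne 0 (Nat.le_refl 0))]
  | (n+1), hne => by
    rw [Finset.prod_range_succ, telescope_prod' h n (fun k hk => hne k (hk.trans (Nat.le_succ n)))]
    have h0 : h 0 ≠ 0 := hne 0 (Nat.zero_le _)
    have hn : h n ≠ 0 := hne n (Nat.le_succ n)
    field_simp

lemma telescope_sum' (u : ℕ → ℝ) : ∀ n : ℕ,
    ∑ k ∈ Finset.range n, (u (k+1) - u k) = u n - u 0
  | 0 => by simp
  | (n+1) => by rw [Finset.sum_range_succ, telescope_sum' u n]; ring

lemma ratio_prod (M j : ℕ) (hjM : j + 1 ≤ M) :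
    ∏ i ∈ Finset.Icc 1 j, ((((M:ℝ)-(i:ℝ))*((M:ℝ)-(i:ℝ)+1))/((((M:ℝ)-(i:ℝ)+1)*((M:ℝ)-(i:ℝ)+2)))) =
      (((M:ℝ)-(j:ℝ))*((M:ℝ)-(j:ℝ)+1))/((M:ℝ)*((M:ℝ)+1)) := by
  have hmj : (j:ℝ) + 1 ≤ (M:ℝ) := by exact_mod_cast hjM
  have hne : ∀ k, k ≤ j → (fun k : ℕ => ((M:ℝ)-(k:ℝ))*((M:ℝ)-(k:ℝ)+1)) k ≠ 0 := by
    intro k hk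
    have hkr : (k:ℝ) ≤ (j:ℝ) := by exact_mod_cast hk
    have h1 : 0 < (M:ℝ)-(k:ℝ) := by linarith
    have h2 : 0 < (M:ℝ)-(k:ℝ)+1 := by linarith
    exact ne_of_gt (mul_pos h1 h2)
  have tel := telescope_prod' (fun k : ℕ => ((M:ℝ)-(k:ℝ))*((M:ℝ)-(k:ℝ)+1)) j hne
  simp only [Nat.cast_add, Nat.cast_one, Nat.cast_zero, sub_zero] at tel
  rw [← Finset.Ico_add_one_right_eq_Icc, Finset.prod_Ico_eq_prod_range]
  simp only [Nat.add_sub_cancel]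
  rw [← tel]
  apply Finset.prod_congr rfl
  intro k hk
  have hkj : k < j := Finset.mem_range.1 hk
  have hkr : (k:ℝ) + 1 ≤ (j:ℝ) := by exact_mod_cast hkj
  have h1 : 0 < (M:ℝ)-(k:ℝ)-1 := by linarith
  have h2 : 0 < (M:ℝ)-(k:ℝ) := by linarith
  have h3 : 0 < (M:ℝ)-(k:ℝ)+1 := by linarith
  push_cast
  rw [div_eq_div_iff (by nlinarith) (by nlinarith)]
  ring

lemma t_sum (M j : ℕ) (hjM : j + 1 ≤ M) :
    ∑ i ∈ Finset.Icc 1 j, 2*((M:ℝ)-(j:ℝ))/(((M:ℝ)-(i:ℝ))*((M:ℝ)-(i:ℝ)+1)) = 2*(j:ℝ)/(M:ℝ) := by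
  have hmj : (j:ℝ) + 1 ≤ (M:ℝ) := by exact_mod_cast hjM
  have hM : (0:ℝ) < (M:ℝ) := by linarith [Nat.cast_nonneg (α := ℝ) j]
  have tel := telescope_sum' (fun k : ℕ => 2*((M:ℝ)-(j:ℝ))/((M:ℝ)-(k:ℝ))) j
  simp only [Nat.cast_add, Nat.cast_one, Nat.cast_zero, sub_zero] at tel
  rw [← Finset.Ico_add_one_right_eq_Icc, Finset.sum_Ico_eq_sum_range]
  simp only [Nat.add_sub_cancel]

  have congr1 : ∀ k ∈ Finset.range j,
      2*((M:ℝ)-(j:ℝ))/(((M:ℝ)-((1+k:ℕ):ℝ))*((M:ℝ)-((1+k:ℕ):ℝ)+1)) =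
      2*((M:ℝ)-(j:ℝ))/((M:ℝ)-((k:ℝ)+1)) - 2*((M:ℝ)-(j:ℝ))/((M:ℝ)-(k:ℝ)) := by
    intro k hk
    have hkj : k < j := Finset.mem_range.1 hk
    have hkr : (k:ℝ) + 1 ≤ (j:ℝ) := by exact_mod_cast hkj
    have h1 : 0 < (M:ℝ)-(k:ℝ)-1 := by linarith
    have h2 : 0 < (M:ℝ)-(k:ℝ) := by linarith
    push_cast
    rw [div_sub_div _ _ (by linarith) (by linarith), div_eq_div_iff (by nlinarith) (by nlinarith)]
    ring
  rw [Finset.sum_congr rfl congr1, tel]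
  have hd : 0 < (M:ℝ)-(j:ℝ) := by linarith
  field_simp
  ring


lemma psi_formula (M j : ℕ) (hjM : j + 1 ≤ M) :
    ∏ i ∈ Finset.Icc 1 j, (1 - 2*((j:ℝ)-(i:ℝ)+1)/(((M:ℝ)-(i:ℝ)+1)*((M:ℝ)-(i:ℝ)+2))) =
    (((M:ℝ)-(j:ℝ))*((M:ℝ)-(j:ℝ)+1))/((M:ℝ)*((M:ℝ)+1)) *
      ∏ i ∈ Finset.Icc 1 j, (1 + 2*((M:ℝ)-(j:ℝ))/(((M:ℝ)-(i:ℝ))*((M:ℝ)-(i:ℝ)+1))) := by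
  have hmj : (j:ℝ) + 1 ≤ (M:ℝ) := by exact_mod_cast hjM
  have hcongr : ∀ i ∈ Finset.Icc 1 j,
      (1 - 2*((j:ℝ)-(i:ℝ)+1)/(((M:ℝ)-(i:ℝ)+1)*((M:ℝ)-(i:ℝ)+2))) =
      ((((M:ℝ)-(i:ℝ))*((M:ℝ)-(i:ℝ)+1))/((((M:ℝ)-(i:ℝ)+1)*((M:ℝ)-(i:ℝ)+2)))) *
        (1 + 2*((M:ℝ)-(j:ℝ))/(((M:ℝ)-(i:ℝ))*((M:ℝ)-(i:ℝ)+1))) := by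
    intro i hi
    obtain ⟨hi1, hij⟩ := Finset.mem_Icc.1 hi
    have hir : (i:ℝ) ≤ (j:ℝ) := by exact_mod_cast hij
    have h2 : (0:ℝ) < (M:ℝ)-(i:ℝ) := by linarith
    have h3 : (0:ℝ) < (M:ℝ)-(i:ℝ)+1 := by linarith
    have h4 : (0:ℝ) < (M:ℝ)-(i:ℝ)+2 := by linarith
    field_simp
    ring
  rw [Finset.prod_congr rfl hcongr, Finset.prod_mul_distrib, ratio_prod M j hjM]

lemma psi_upper (M j : ℕ) (hjM : j + 1 ≤ M) :
    ∏ i ∈ Finset.Icc 1 j, (1 - 2*((j:ℝ)-(i:ℝ)+1)/(((M:ℝ)-(i:ℝ)+1)*((M:ℝ)-(i:ℝ)+2))) ≤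
    (((M:ℝ)-(j:ℝ))*((M:ℝ)-(j:ℝ)+1))/((M:ℝ)*((M:ℝ)+1)) * Real.exp (2*(j:ℝ)/(M:ℝ)) := by
  have hmj : (j:ℝ) + 1 ≤ (M:ℝ) := by exact_mod_cast hjM
  have hM : (0:ℝ) < (M:ℝ) := by linarith [Nat.cast_nonneg (α := ℝ) j]
  have hd0 : (0:ℝ) ≤ (M:ℝ)-(j:ℝ) := by linarith
  have hD : (0:ℝ) ≤ (((M:ℝ)-(j:ℝ))*((M:ℝ)-(j:ℝ)+1))/((M:ℝ)*((M:ℝ)+1)) :=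
    div_nonneg (mul_nonneg hd0 (by linarith)) (by positivity)
  rw [psi_formula M j hjM]
  apply mul_le_mul_of_nonneg_left _ hD
  rw [← t_sum M j hjM, Real.exp_sum]
  apply Finset.prod_le_prod
  · intro i hi
    obtain ⟨hi1, hij⟩ := Finset.mem_Icc.1 hi
    have hir : (i:ℝ) ≤ (j:ℝ) := by exact_mod_cast hij
    have h2 : (0:ℝ) < (M:ℝ)-(i:ℝ) := by linarith
    positivity
  · intro i hi
    have := Real.add_one_le_exp (2*((M:ℝ)-(j:ℝ))/(((M:ℝ)-(i:ℝ))*((M:ℝ)-(i:ℝ)+1)))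
    linarith

lemma psi_lower (M j : ℕ) (hjM : j + 1 ≤ M) :
    (((M:ℝ)-(j:ℝ))*((M:ℝ)-(j:ℝ)+1))/((M:ℝ)*((M:ℝ)+1)) * Real.exp (2*(j:ℝ)/(M:ℝ))
      * (1 - 4/((M:ℝ)-(j:ℝ)+1)) ≤
    ∏ i ∈ Finset.Icc 1 j, (1 - 2*((j:ℝ)-(i:ℝ)+1)/(((M:ℝ)-(i:ℝ)+1)*((M:ℝ)-(i:ℝ)+2))) := by
  have hmj : (j:ℝ) + 1 ≤ (M:ℝ) := by exact_mod_cast hjM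
  have hM : (0:ℝ) < (M:ℝ) := by linarith [Nat.cast_nonneg (α := ℝ) j]
  have hd : (1:ℝ) ≤ (M:ℝ)-(j:ℝ) := by linarith
  rw [psi_formula M j hjM]
  rw [mul_assoc]
  apply mul_le_mul_of_nonneg_left _ (by positivity)
  -- t facts
  set t : ℕ → ℝ := fun i => 2*((M:ℝ)-(j:ℝ))/(((M:ℝ)-(i:ℝ))*((M:ℝ)-(i:ℝ)+1)) with ht
  have tfacts : ∀ i ∈ Finset.Icc 1 j, 0 ≤ t i ∧ t i ≤ 2/((M:ℝ)-(j:ℝ)+1) := by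
    intro i hi
    obtain ⟨hi1, hij⟩ := Finset.mem_Icc.1 hi
    have hir : (i:ℝ) ≤ (j:ℝ) := by exact_mod_cast hij
    have h2 : (0:ℝ) < (M:ℝ)-(i:ℝ) := by linarith
    have h3 : (0:ℝ) < (M:ℝ)-(i:ℝ)+1 := by linarith
    constructor
    · apply div_nonneg (by linarith) (by positivity)
    · rw [div_le_div_iff₀ (by positivity) (by linarith)]
      nlinarith
  -- sum of squares bound
  have hsumsq : ∑ i ∈ Finset.Icc 1 j, (t i)^2 ≤ 4/((M:ℝ)-(j:ℝ)+1) := by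
    have step : ∑ i ∈ Finset.Icc 1 j, (t i)^2 ≤
        ∑ i ∈ Finset.Icc 1 j, (2/((M:ℝ)-(j:ℝ)+1)) * t i := by
      apply Finset.sum_le_sum
      intro i hi
      obtain ⟨h0, h1⟩ := tfacts i hi
      nlinarith
    rw [← Finset.mul_sum] at step
    rw [t_sum M j hjM] at step
    have hjM' : 2*(j:ℝ)/(M:ℝ) ≤ 2 := by
      rw [div_le_iff₀ hM]; linarith
    have h5 : (0:ℝ) < (M:ℝ)-(j:ℝ)+1 := by linarith
    calc ∑ i ∈ Finset.Icc 1 j, (t i)^2 ≤ 2/((M:ℝ)-(j:ℝ)+1) * (2*(j:ℝ)/(M:ℝ)) := step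
      _ ≤ 2/((M:ℝ)-(j:ℝ)+1) * 2 := by
          apply mul_le_mul_of_nonneg_left hjM' (by positivity)
      _ = 4/((M:ℝ)-(j:ℝ)+1) := by ring
  -- product lower bound
  have prodlb : Real.exp (∑ i ∈ Finset.Icc 1 j, (t i - (t i)^2)) ≤
      ∏ i ∈ Finset.Icc 1 j, (1 + t i) := by
    rw [Real.exp_sum]
    apply Finset.prod_le_prod
    · intro i hi; positivity
    · intro i hi; exact exp_sub_sq_le (tfacts i hi).1
  have hsum : 2*(j:ℝ)/(M:ℝ) - 4/((M:ℝ)-(j:ℝ)+1) ≤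
      ∑ i ∈ Finset.Icc 1 j, (t i - (t i)^2) := by
    rw [Finset.sum_sub_distrib, t_sum M j hjM]
    linarith
  calc Real.exp (2*(j:ℝ)/(M:ℝ)) * (1 - 4/((M:ℝ)-(j:ℝ)+1))
      ≤ Real.exp (2*(j:ℝ)/(M:ℝ)) * Real.exp (-(4/((M:ℝ)-(j:ℝ)+1))) := by
        apply mul_le_mul_of_nonneg_left _ (Real.exp_nonneg _)
        have := Real.add_one_le_exp (-(4/((M:ℝ)-(j:ℝ)+1)))
        linarith
    _ = Real.exp (2*(j:ℝ)/(M:ℝ) - 4/((M:ℝ)-(j:ℝ)+1)) := by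
        rw [← Real.exp_add]; ring_nf
    _ ≤ Real.exp (∑ i ∈ Finset.Icc 1 j, (t i - (t i)^2)) := Real.exp_le_exp.2 hsum
    _ ≤ ∏ i ∈ Finset.Icc 1 j, (1 + t i) := prodlb


lemma psi_est (M j : ℕ) (hj1 : 1 ≤ j) (hjM : j ≤ M) :
    gfun ((j:ℝ)/(M:ℝ)) - 4*Real.exp 2*((M:ℝ)-(j:ℝ))/(M:ℝ)^2 ≤
      ∏ i ∈ Finset.Icc 1 j, (1 - 2*((j:ℝ)-(i:ℝ)+1)/(((M:ℝ)-(i:ℝ)+1)*((M:ℝ)-(i:ℝ)+2))) ∧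
    ∏ i ∈ Finset.Icc 1 j, (1 - 2*((j:ℝ)-(i:ℝ)+1)/(((M:ℝ)-(i:ℝ)+1)*((M:ℝ)-(i:ℝ)+2))) ≤
      gfun ((j:ℝ)/(M:ℝ)) + Real.exp 2/(4*(M:ℝ)) := by
  have hM : (0:ℝ) < (M:ℝ) := by
    have : 0 < M := lt_of_lt_of_le hj1 hjM
    exact_mod_cast this
  rcases eq_or_lt_of_le hjM with heq | hlt
  · -- j = M
    subst heq
    have hzero : ∏ i ∈ Finset.Icc 1 j, (1 - 2*((j:ℝ)-(i:ℝ)+1)/(((j:ℝ)-(i:ℝ)+1)*((j:ℝ)-(i:ℝ)+2))) = 0 := by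
      apply Finset.prod_eq_zero (Finset.mem_Icc.2 ⟨hj1, le_refl j⟩)
      norm_num
    rw [hzero]
    have hg : gfun ((j:ℝ)/(j:ℝ)) = 0 := by
      rw [div_self (ne_of_gt hM)]
      unfold gfun; norm_num
    rw [hg]
    constructor
    · simp only [sub_self]
      rw [mul_zero, zero_div]
      linarith
    · positivity
  · -- j < M
    have hjM' : j + 1 ≤ M := hlt
    have hmj : (j:ℝ) + 1 ≤ (M:ℝ) := by exact_mod_cast hjM'
    have hj1' : (1:ℝ) ≤ (j:ℝ) := by exact_mod_cast hj1
    have hd : (1:ℝ) ≤ (M:ℝ)-(j:ℝ) := by linarith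
    set m := (M:ℝ)
    set jr := (j:ℝ)
    have hg : gfun (jr/m) = Real.exp (2*jr/m) * ((m-jr)/m)^2 := by
      unfold gfun
      rw [mul_div_assoc]
      congr 2
      field_simp
    have hE2 : Real.exp (2*jr/m) ≤ Real.exp 2 := by
      apply Real.exp_le_exp.2
      rw [div_le_iff₀ hM]; linarith
    have hE0 : (0:ℝ) < Real.exp (2*jr/m) := Real.exp_pos _
    have hDsplit : ((m-jr)*(m-jr+1))/(m*(m+1)) =
        ((m-jr)/m)^2 + (m-jr)*jr/(m^2*(m+1)) := by
      field_simp
      ring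
    constructor
    · -- lower
      refine le_trans ?_ (psi_lower M j hjM')
      have key : ((m-jr)*(m-jr+1))/(m*(m+1)) * Real.exp (2*jr/m) * (1 - 4/(m-jr+1)) =
          ((m-jr)*(m-jr+1))/(m*(m+1)) * Real.exp (2*jr/m)
          - Real.exp (2*jr/m) * (4*(m-jr)/(m*(m+1))) := by
        field_simp
      rw [key, hg]
      have h1 : Real.exp (2*jr/m) * ((m-jr)/m)^2 ≤ ((m-jr)*(m-jr+1))/(m*(m+1)) * Real.exp (2*jr/m) := by
        rw [hDsplit]
        have : (0:ℝ) ≤ (m-jr)*jr/(m^2*(m+1)) :=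
          div_nonneg (mul_nonneg (by linarith) (by linarith))
            (mul_pos (pow_pos hM 2) (by linarith)).le
        nlinarith
      have h2 : Real.exp (2*jr/m) * (4*(m-jr)/(m*(m+1))) ≤ 4*Real.exp 2*(m-jr)/m^2 := by
        have ha : 4*(m-jr)/(m*(m+1)) ≤ 4*(m-jr)/m^2 := by
          have hmm : (0:ℝ) < m*(m+1) := mul_pos hM (by linarith)
          have hm2 : (0:ℝ) < m^2 := pow_pos hM 2
          rw [div_le_div_iff₀ hmm hm2]
          have key : m^2 ≤ m*(m+1) := by nlinarith
          nlinarith [mul_le_mul_of_nonneg_left key (by linarith : (0:ℝ) ≤ 4*(m-jr))]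
        calc Real.exp (2*jr/m) * (4*(m-jr)/(m*(m+1))) ≤ Real.exp 2 * (4*(m-jr)/m^2) := by
              apply mul_le_mul hE2 ha
                (div_nonneg (by linarith) (mul_pos hM (by linarith)).le) (Real.exp_nonneg _)
          _ = 4*Real.exp 2*(m-jr)/m^2 := by ring
      linarith
    · -- upper
      refine le_trans (psi_upper M j hjM') ?_
      rw [hg, hDsplit]
      have expand : (((m-jr)/m)^2 + (m-jr)*jr/(m^2*(m+1))) * Real.exp (2*jr/m) =
          Real.exp (2*jr/m) * ((m-jr)/m)^2 + (m-jr)*jr/(m^2*(m+1)) * Real.exp (2*jr/m) := by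
        ring
      rw [expand]
      have h3 : (m-jr)*jr/(m^2*(m+1)) * Real.exp (2*jr/m) ≤ Real.exp 2/(4*m) := by
        have ha : (m-jr)*jr/(m^2*(m+1)) ≤ 1/(4*m) := by
          have hm2 : (0:ℝ) < m^2*(m+1) := mul_pos (pow_pos hM 2) (by linarith)
          have h4m : (0:ℝ) < 4*m := by linarith
          rw [div_le_div_iff₀ hm2 h4m]
          have key : 4*(jr*(m-jr)) ≤ m^2 := by nlinarith [sq_nonneg (m - 2*jr)]
          have key2 : 4*(jr*(m-jr))*m ≤ m^2*m := mul_le_mul_of_nonneg_right key hM.le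
          have key3 : m^2*m ≤ m^2*(m+1) :=
            mul_le_mul_of_nonneg_left (by linarith) (sq_nonneg m)
          nlinarith [key2, key3]
        calc (m-jr)*jr/(m^2*(m+1)) * Real.exp (2*jr/m) ≤ 1/(4*m) * Real.exp 2 := by
              apply mul_le_mul ha hE2 (le_of_lt hE0)
                (div_nonneg one_pos.le (by linarith))
          _ = Real.exp 2/(4*m) := by ring
      linarith


lemma gfun_cont : Continuous gfun := by unfold gfun; fun_prop

lemma gfun_zero : gfun 0 = 1 := by unfold gfun; norm_num

lemma gfun_one : gfun 1 = 0 := by unfold gfun; norm_num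

lemma riemann (M : ℕ) (hM : 1 ≤ M) :
    (Real.exp 2 - 5)/4 - 1/(M:ℝ) ≤ ∑ k ∈ Finset.range M, (1/(M:ℝ)) * gfun ((((k+1):ℕ):ℝ)/(M:ℝ)) ∧
    ∑ k ∈ Finset.range M, (1/(M:ℝ)) * gfun ((((k+1):ℕ):ℝ)/(M:ℝ)) ≤ (Real.exp 2 - 5)/4 := by
  have hm : (0:ℝ) < (M:ℝ) := by exact_mod_cast hM
  have hint : ∀ k, k < M → IntervalIntegrable gfun MeasureTheory.volume
      ((fun k : ℕ => (k:ℝ)/(M:ℝ)) k) ((fun k : ℕ => (k:ℝ)/(M:ℝ)) (k+1)) :=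
    fun k _ => gfun_cont.intervalIntegrable _ _
  have hsplit := intervalIntegral.sum_integral_adjacent_intervals hint
  simp only [Nat.cast_zero, zero_div] at hsplit
  rw [div_self (ne_of_gt hm), gfun_integral] at hsplit
  have hdiff : ∀ k : ℕ, (((k+1):ℕ):ℝ)/(M:ℝ) - (k:ℝ)/(M:ℝ) = 1/(M:ℝ) := by
    intro k; push_cast; ring
  have hab : ∀ k : ℕ, (k:ℝ)/(M:ℝ) ≤ (((k+1):ℕ):ℝ)/(M:ℝ) := by
    intro k
    apply div_le_div_of_nonneg_right _ hm.le
    push_cast; linarith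
  have pieceLo : ∀ k ∈ Finset.range M,
      (1/(M:ℝ)) * gfun ((((k+1):ℕ):ℝ)/(M:ℝ)) ≤
        (∫ x in ((k:ℝ)/(M:ℝ))..((((k+1):ℕ):ℝ)/(M:ℝ)), gfun x) := by
    intro k hk
    have hkM : k < M := Finset.mem_range.1 hk
    have hkr : (k:ℝ)+1 ≤ (M:ℝ) := by exact_mod_cast hkM
    have hk0 : (0:ℝ) ≤ (k:ℝ) := Nat.cast_nonneg k
    have hk1 : (((k+1):ℕ):ℝ)/(M:ℝ) ≤ 1 := by
      push_cast; rw [div_le_one hm]; linarith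
    have hmono : ∀ x ∈ Set.Icc ((k:ℝ)/(M:ℝ)) ((((k+1):ℕ):ℝ)/(M:ℝ)),
        (fun _ : ℝ => gfun ((((k+1):ℕ):ℝ)/(M:ℝ))) x ≤ gfun x := by
      intro x hx
      exact gfun_antitone (le_trans (div_nonneg hk0 hm.le) hx.1) hx.2 hk1
    have := intervalIntegral.integral_mono_on (hab k)
      (intervalIntegrable_const (μ := MeasureTheory.volume)) (gfun_cont.intervalIntegrable _ _) hmono
    rwa [intervalIntegral.integral_const, hdiff k, smul_eq_mul] at this
  have pieceHi : ∀ k ∈ Finset.range M,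
      (∫ x in ((k:ℝ)/(M:ℝ))..((((k+1):ℕ):ℝ)/(M:ℝ)), gfun x) ≤
        (1/(M:ℝ)) * gfun ((k:ℝ)/(M:ℝ)) := by
    intro k hk
    have hkM : k < M := Finset.mem_range.1 hk
    have hkr : (k:ℝ)+1 ≤ (M:ℝ) := by exact_mod_cast hkM
    have hk0 : (0:ℝ) ≤ (k:ℝ) := Nat.cast_nonneg k
    have hk1 : (((k+1):ℕ):ℝ)/(M:ℝ) ≤ 1 := by
      push_cast; rw [div_le_one hm]; linarith
    have hmono : ∀ x ∈ Set.Icc ((k:ℝ)/(M:ℝ)) ((((k+1):ℕ):ℝ)/(M:ℝ)),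
        gfun x ≤ (fun _ : ℝ => gfun ((k:ℝ)/(M:ℝ))) x := by
      intro x hx
      exact gfun_antitone (div_nonneg hk0 hm.le) hx.1 (le_trans hx.2 hk1)
    have := intervalIntegral.integral_mono_on (hab k)
      (gfun_cont.intervalIntegrable _ _) (intervalIntegrable_const (μ := MeasureTheory.volume)) hmono
    rwa [intervalIntegral.integral_const, hdiff k, smul_eq_mul] at this
  constructor
  · -- lower bound: I ≤ S_high = S_low + 1/M
    have hI_le : (Real.exp 2 - 5)/4 ≤ ∑ k ∈ Finset.range M, (1/(M:ℝ)) * gfun ((k:ℝ)/(M:ℝ)) := by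
      rw [← hsplit]
      exact Finset.sum_le_sum pieceHi
    have e1 := Finset.sum_range_succ' (fun k : ℕ => (1/(M:ℝ)) * gfun ((k:ℝ)/(M:ℝ))) M
    have e2 := Finset.sum_range_succ (fun k : ℕ => (1/(M:ℝ)) * gfun ((k:ℝ)/(M:ℝ))) M
    simp only [Nat.cast_zero, zero_div, gfun_zero, mul_one] at e1
    rw [div_self (ne_of_gt hm), gfun_one, mul_zero, add_zero] at e2
    -- e1 : ∑_{range (M+1)} f = ∑_{k∈range M} f(k+1) + 1/M ; e2 : ∑_{range (M+1)} f = ∑_{range M} f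
    have : ∑ k ∈ Finset.range M, (1/(M:ℝ)) * gfun ((k:ℝ)/(M:ℝ)) =
        (∑ k ∈ Finset.range M, (1/(M:ℝ)) * gfun ((((k+1):ℕ):ℝ)/(M:ℝ))) + 1/(M:ℝ) := by
      rw [← e2, e1]
    linarith [hI_le, this]
  · -- upper bound: S_low ≤ I
    rw [← hsplit]
    exact Finset.sum_le_sum pieceLo


/-- Linear-rank model: the asymptotic fraction of followers is `(e² - 5)/4`. -/
theorem stmt19 :
    Filter.Tendsto (fun M : ℕ =>
        (1 / (M : ℝ)) * ∑ j ∈ Finset.Icc 1 M, ∏ i ∈ Finset.Icc 1 j,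
          (1 - 2 * ((j : ℝ) - (i : ℝ) + 1) /
            (((M : ℝ) - (i : ℝ) + 1) * ((M : ℝ) - (i : ℝ) + 2))))
      Filter.atTop
      (nhds ((Real.exp 2 - 5) / 4)) := by
  have hexp : (0:ℝ) < Real.exp 2 := Real.exp_pos 2
  have key : ∀ M : ℕ, 1 ≤ M →
      (Real.exp 2 - 5)/4 - (1 + 4*Real.exp 2)/(M:ℝ) ≤
        (1/(M:ℝ)) * ∑ j ∈ Finset.Icc 1 M, ∏ i ∈ Finset.Icc 1 j,
          (1 - 2 * ((j : ℝ) - (i : ℝ) + 1) /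
            (((M : ℝ) - (i : ℝ) + 1) * ((M : ℝ) - (i : ℝ) + 2))) ∧
      (1/(M:ℝ)) * ∑ j ∈ Finset.Icc 1 M, ∏ i ∈ Finset.Icc 1 j,
          (1 - 2 * ((j : ℝ) - (i : ℝ) + 1) /
            (((M : ℝ) - (i : ℝ) + 1) * ((M : ℝ) - (i : ℝ) + 2))) ≤
        (Real.exp 2 - 5)/4 + (1 + 4*Real.exp 2)/(M:ℝ) := by
    intro M hM
    have hm : (0:ℝ) < (M:ℝ) := by exact_mod_cast hM
    have hLrw : ∑ j ∈ Finset.Icc 1 M, (1/(M:ℝ)) * gfun ((j:ℝ)/(M:ℝ)) =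
        ∑ k ∈ Finset.range M, (1/(M:ℝ)) * gfun ((((k+1):ℕ):ℝ)/(M:ℝ)) := by
      rw [← Finset.Ico_add_one_right_eq_Icc, Finset.sum_Ico_eq_sum_range]
      simp only [Nat.add_sub_cancel]
      exact Finset.sum_congr rfl (fun k _ => by rw [Nat.add_comm])
    obtain ⟨hRlo, hRhi⟩ := riemann M hM
    rw [← hLrw] at hRlo hRhi
    have cardIcc : (Finset.Icc 1 M).card = M := by
      rw [Nat.card_Icc]; omega
    rw [Finset.mul_sum]
    constructor
    · -- lower
      have sumLo : ∑ j ∈ Finset.Icc 1 M, ((1/(M:ℝ)) * gfun ((j:ℝ)/(M:ℝ)) - 4*Real.exp 2/(M:ℝ)^2) ≤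
          ∑ j ∈ Finset.Icc 1 M, (1/(M:ℝ)) * ∏ i ∈ Finset.Icc 1 j,
            (1 - 2 * ((j : ℝ) - (i : ℝ) + 1) /
              (((M : ℝ) - (i : ℝ) + 1) * ((M : ℝ) - (i : ℝ) + 2))) := by
        apply Finset.sum_le_sum
        intro j hj
        obtain ⟨hj1, hjM⟩ := Finset.mem_Icc.1 hj
        have hjr : (j:ℝ) ≤ (M:ℝ) := by exact_mod_cast hjM
        have hjr1 : (1:ℝ) ≤ (j:ℝ) := by exact_mod_cast hj1
        have h := (psi_est M j hj1 hjM).1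
        have hX : 4*Real.exp 2*((M:ℝ)-(j:ℝ))/(M:ℝ)^2 ≤ 4*Real.exp 2/(M:ℝ) := by
          rw [div_le_div_iff₀ (by positivity) hm]
          nlinarith [mul_le_mul_of_nonneg_left (show (M:ℝ)-(j:ℝ) ≤ (M:ℝ) by linarith)
            (by positivity : (0:ℝ) ≤ 4*Real.exp 2*(M:ℝ))]
        have step : gfun ((j:ℝ)/(M:ℝ)) - 4*Real.exp 2/(M:ℝ) ≤
            ∏ i ∈ Finset.Icc 1 j,
              (1 - 2 * ((j : ℝ) - (i : ℝ) + 1) /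
                (((M : ℝ) - (i : ℝ) + 1) * ((M : ℝ) - (i : ℝ) + 2))) := by linarith
        have := mul_le_mul_of_nonneg_left step (by positivity : (0:ℝ) ≤ 1/(M:ℝ))
        have hrw : (1/(M:ℝ)) * (gfun ((j:ℝ)/(M:ℝ)) - 4*Real.exp 2/(M:ℝ)) =
            (1/(M:ℝ)) * gfun ((j:ℝ)/(M:ℝ)) - 4*Real.exp 2/(M:ℝ)^2 := by
          field_simp
        rw [hrw] at this
        exact this
      rw [Finset.sum_sub_distrib, Finset.sum_const, cardIcc, nsmul_eq_mul] at sumLo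
      have hcast : (M:ℝ) * (4*Real.exp 2/(M:ℝ)^2) = 4*Real.exp 2/(M:ℝ) := by
        field_simp
      rw [hcast] at sumLo
      have hsplitC : ((Real.exp 2 - 5)/4 : ℝ) - (1 + 4*Real.exp 2)/(M:ℝ) =
          ((Real.exp 2 - 5)/4 - 1/(M:ℝ)) - 4*Real.exp 2/(M:ℝ) := by ring
      rw [hsplitC]
      linarith
    · -- upper
      have sumHi : ∑ j ∈ Finset.Icc 1 M, (1/(M:ℝ)) * ∏ i ∈ Finset.Icc 1 j,
            (1 - 2 * ((j : ℝ) - (i : ℝ) + 1) /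
              (((M : ℝ) - (i : ℝ) + 1) * ((M : ℝ) - (i : ℝ) + 2))) ≤
          ∑ j ∈ Finset.Icc 1 M, ((1/(M:ℝ)) * gfun ((j:ℝ)/(M:ℝ)) + Real.exp 2/(4*(M:ℝ)^2)) := by
        apply Finset.sum_le_sum
        intro j hj
        obtain ⟨hj1, hjM⟩ := Finset.mem_Icc.1 hj
        have h := (psi_est M j hj1 hjM).2
        have := mul_le_mul_of_nonneg_left h (by positivity : (0:ℝ) ≤ 1/(M:ℝ))
        have hrw : (1/(M:ℝ)) * (gfun ((j:ℝ)/(M:ℝ)) + Real.exp 2/(4*(M:ℝ))) =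
            (1/(M:ℝ)) * gfun ((j:ℝ)/(M:ℝ)) + Real.exp 2/(4*(M:ℝ)^2) := by
          field_simp
        rw [hrw] at this
        exact this
      rw [Finset.sum_add_distrib, Finset.sum_const, cardIcc, nsmul_eq_mul] at sumHi
      have hcast : (M:ℝ) * (Real.exp 2/(4*(M:ℝ)^2)) = Real.exp 2/(4*(M:ℝ)) := by
        field_simp
      rw [hcast] at sumHi
      have hlast : Real.exp 2/(4*(M:ℝ)) ≤ (1 + 4*Real.exp 2)/(M:ℝ) := by
        rw [div_le_div_iff₀ (by positivity) hm]
        nlinarith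
      linarith
  apply tendsto_of_tendsto_of_tendsto_of_le_of_le'
    (g := fun M : ℕ => (Real.exp 2 - 5)/4 - (1 + 4*Real.exp 2)/(M:ℝ))
    (h := fun M : ℕ => (Real.exp 2 - 5)/4 + (1 + 4*Real.exp 2)/(M:ℝ))
  · have := tendsto_const_div_atTop_nhds_zero_nat (1 + 4*Real.exp 2)
    have h2 := (tendsto_const_nhds (x := (Real.exp 2 - 5)/4) (f := atTop (α := ℕ))).sub this
    simpa using h2
  · have := tendsto_const_div_atTop_nhds_zero_nat (1 + 4*Real.exp 2)
    have h2 := (tendsto_const_nhds (x := (Real.exp 2 - 5)/4) (f := atTop (α := ℕ))).add this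
    simpa using h2
  · filter_upwards [eventually_ge_atTop 1] with M hM
    exact (key M hM).1
  · filter_upwards [eventually_ge_atTop 1] with M hM
    exact (key M hM).2
end
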